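/- arXiv:1812.10911 — 6 statements merged into one kernel-verified Lean document; each statement's English description precedes it below -/
import Mathlib

section
/- Let g₁,...,g_F ∈ {−1,+1}^Q with F = Q − 1 be vectors such that (1_Q, g₁,...,g_F) form an orthogonal basis of ℝ^Q (each g_f is orthogonal to the all-ones vector and to every other g_k, with g_f'g_f = Q). Let B = (g₁,...,g_F)' ∈ ℝ^{F×Q} and N = diag(n₁,...,n_Q) with all n_q > 0, and set n = Σ_q n_q. Then N^{-1} B' (B N^{-1} B')^{-1} B N^{-1} = N^{-1} − n^{-1} J_Q, where J_Q is the Q×Q all-ones matrix. In particular, the (q,k) entry of N^{-1} B' (B N^{-1} B')^{-1} B N^{-1} equals n_q^{-1} 1{q=k} − n^{-1}. -/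
open Matrix BigOperators

/-- With `F = Q − 1` generating vectors `g_f ∈ {−1,+1}^Q` forming with `1_Q` an
orthogonal basis of `ℝ^Q`, `B = (g₁,…,g_F)'`, `N = diag(n₁,…,n_Q)` positive, `n = Σ n_q`, one has
`N⁻¹ B' (B N⁻¹ B')⁻¹ B N⁻¹ = N⁻¹ − n⁻¹ J_Q`, i.e. entrywise `n_q⁻¹ 1{q=k} − n⁻¹`. -/
theorem stmt1 (Q : ℕ) (hQ : 2 ≤ Q)
    (g : Fin (Q - 1) → Fin Q → ℝ)
    (hpm : ∀ f q, g f q = 1 ∨ g f q = -1)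
    (hones : ∀ f, ∑ q, g f q = 0)
    (horth : ∀ f k, f ≠ k → ∑ q, g f q * g k q = 0)
    (hnorm : ∀ f, ∑ q, g f q * g f q = (Q : ℝ))
    (nv : Fin Q → ℝ) (hn : ∀ q, 0 < nv q) :
    letI B : Matrix (Fin (Q - 1)) (Fin Q) ℝ := Matrix.of g
    letI Ninv : Matrix (Fin Q) (Fin Q) ℝ := Matrix.diagonal fun q => (nv q)⁻¹
    letI n : ℝ := ∑ q, nv q
    Ninv * Bᵀ * (B * Ninv * Bᵀ)⁻¹ * B * Ninv
        = Ninv - n⁻¹ • Matrix.of (fun _ _ => (1 : ℝ)) ∧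
      ∀ q k, (Ninv * Bᵀ * (B * Ninv * Bᵀ)⁻¹ * B * Ninv) q k
        = (if q = k then (nv q)⁻¹ else 0) - n⁻¹ := by
  have hQ0 : (Q : ℝ) ≠ 0 := by positivity
  set B : Matrix (Fin (Q - 1)) (Fin Q) ℝ := Matrix.of g with hB
  set Ninv : Matrix (Fin Q) (Fin Q) ℝ := Matrix.diagonal fun q => (nv q)⁻¹ with hNinv
  set Nm : Matrix (Fin Q) (Fin Q) ℝ := Matrix.diagonal nv with hNm
  set J : Matrix (Fin Q) (Fin Q) ℝ := Matrix.of (fun _ _ => (1 : ℝ)) with hJ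
  set n : ℝ := ∑ q, nv q with hn'
  have hn0 : n ≠ 0 := by
    have hpos : 0 < n := Finset.sum_pos (fun q _ => hn q)
      (Finset.univ_nonempty_iff.mpr (Fin.pos_iff_nonempty.mp (by omega)))
    exact hpos.ne'
  -- diagonal facts
  have hNiN : Ninv * Nm = 1 := by
    rw [hNinv, hNm, diagonal_mul_diagonal]
    have : (fun q => (nv q)⁻¹ * nv q) = fun _ => (1:ℝ) := by
      funext q; exact inv_mul_cancel₀ (hn q).ne'
    rw [this, diagonal_one]
  have hNNi : Nm * Ninv = 1 := by
    rw [hNinv, hNm, diagonal_mul_diagonal]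
    have : (fun q => nv q * (nv q)⁻¹) = fun _ => (1:ℝ) := by
      funext q; exact mul_inv_cancel₀ (hn q).ne'
    rw [this, diagonal_one]
  -- structural facts
  set A : Matrix (Fin Q) (Fin Q) ℝ :=
    Matrix.of (fun i q => if h : (i : ℕ) < Q - 1 then g ⟨i, h⟩ q else 1) with hA
  have hAAt : A * Aᵀ = (Q : ℝ) • 1 := by
    ext i j
    simp only [hA, mul_apply, transpose_apply, of_apply, Matrix.smul_apply, one_apply, smul_eq_mul]
    by_cases hi : (i : ℕ) < Q - 1 <;> by_cases hj : (j : ℕ) < Q - 1 <;>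
      simp only [hi, hj, dif_pos, dif_neg, not_false_iff, mul_one, one_mul]
    · rcases eq_or_ne i j with rfl | hij
      · simp [hnorm ⟨i, hi⟩]
      · have : (⟨(i:ℕ), hi⟩ : Fin (Q-1)) ≠ ⟨(j:ℕ), hj⟩ := by
          simp [Fin.ext_iff]; exact fun h => hij (Fin.ext h)
        simp [horth _ _ this, if_neg hij]
    · have hij : i ≠ j := fun h => hj (h ▸ hi)
      simp [hones ⟨i, hi⟩, if_neg hij]
    · have hij : i ≠ j := fun h => hi (h ▸ hj)
      simp [hones ⟨j, hj⟩, if_neg hij]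
    · have hij : i = j := Fin.ext (by omega)
      simp [hij, Finset.card_univ]
  have hAtA : Aᵀ * A = (Q : ℝ) • 1 := by
    have h1 : A * ((Q : ℝ)⁻¹ • Aᵀ) = 1 := by
      rw [Matrix.mul_smul, hAAt, smul_smul, inv_mul_cancel₀ hQ0, one_smul]
    have h2 : ((Q : ℝ)⁻¹ • Aᵀ) * A = 1 := mul_eq_one_comm.mp h1
    calc Aᵀ * A = (Q : ℝ) • (((Q : ℝ)⁻¹ • Aᵀ) * A) := by
          rw [Matrix.smul_mul, smul_smul, mul_inv_cancel₀ hQ0, one_smul]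
      _ = (Q : ℝ) • 1 := by rw [h2]
  have hBtB : Bᵀ * B = (Q : ℝ) • 1 - J := by
    have hQ1 : Q - 1 + 1 = Q := by omega
    ext q k
    have h := congrFun (congrFun hAtA q) k
    simp only [mul_apply, transpose_apply] at h ⊢
    rw [← (finCongr hQ1).sum_comp (fun i => A i q * A i k)] at h
    rw [Fin.sum_univ_castSucc] at h
    have hlast : A (finCongr hQ1 (Fin.last (Q-1))) q * A (finCongr hQ1 (Fin.last (Q-1))) k = 1 := by
      simp [hA, Fin.last]
    have hcast : ∀ f : Fin (Q-1), A (finCongr hQ1 f.castSucc) q * A (finCongr hQ1 f.castSucc) k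
        = g f q * g f k := by
      intro f
      have hf : ((finCongr hQ1 f.castSucc : Fin Q) : ℕ) < Q - 1 := by
        simpa using f.isLt
      simp only [hA, of_apply, dif_pos hf]
      have heq : (⟨((finCongr hQ1 f.castSucc : Fin Q) : ℕ), hf⟩ : Fin (Q-1)) = f :=
        Fin.ext (by simp)
      rw [heq]
    rw [Finset.sum_congr rfl (fun f _ => hcast f), hlast] at h
    simp only [Matrix.smul_apply, one_apply, Matrix.sub_apply, hJ, hB, of_apply, smul_eq_mul] at h ⊢
    linarith
  have hBBt : B * Bᵀ = (Q : ℝ) • 1 := by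
    ext f k
    simp only [hB, mul_apply, transpose_apply, of_apply, Matrix.smul_apply, one_apply, smul_eq_mul]
    rcases eq_or_ne f k with rfl | hfk
    · simp [hnorm f]
    · simp [horth _ _ hfk, if_neg hfk]
  have hBJ : B * J = 0 := by
    ext f k
    simp [hB, hJ, mul_apply, hones f]
  have hJNJ : J * (Nm * J) = n • J := by
    ext q k
    simp [hJ, hNm, mul_apply, diagonal, Finset.mul_sum, hn']
  -- rewrite rules
  have r1 : ∀ (m : Type) [Fintype m] (X : Matrix (Fin Q) m ℝ),
      Bᵀ * (B * X) = (Q : ℝ) • X - J * X := by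
    intro m _ X
    rw [← Matrix.mul_assoc, hBtB, Matrix.sub_mul, Matrix.smul_mul, Matrix.one_mul]
  have r2 : ∀ (m : Type) [Fintype m] (X : Matrix (Fin Q) m ℝ),
      B * (J * X) = 0 := by
    intro m _ X
    rw [← Matrix.mul_assoc, hBJ, Matrix.zero_mul]
  have r3 : ∀ (m : Type) [Fintype m] (X : Matrix (Fin Q) m ℝ),
      J * (Nm * (J * X)) = n • (J * X) := by
    intro m _ X
    rw [← Matrix.mul_assoc, ← Matrix.mul_assoc, Matrix.mul_assoc J Nm J, hJNJ,
      Matrix.smul_mul]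
  have r4 : ∀ (m : Type) [Fintype m] (X : Matrix (Fin Q) m ℝ),
      Ninv * (Nm * X) = X := by
    intro m _ X
    rw [← Matrix.mul_assoc, hNiN, Matrix.one_mul]
  have r5 : ∀ (m : Type) [Fintype m] (X : Matrix (Fin Q) m ℝ),
      Nm * (Ninv * X) = X := by
    intro m _ X
    rw [← Matrix.mul_assoc, hNNi, Matrix.one_mul]
  -- the explicit inverse
  set C : Matrix (Fin (Q-1)) (Fin (Q-1)) ℝ :=
    ((Q : ℝ)^2)⁻¹ • (B * Nm * Bᵀ - n⁻¹ • (B * Nm * J * Nm * Bᵀ)) with hC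
  have hMC : (B * Ninv * Bᵀ) * C = 1 := by
    rw [hC]
    simp only [Matrix.mul_smul, Matrix.mul_sub, Matrix.mul_assoc, r1, r2, r3, r4, r5,
      Matrix.mul_sub, Matrix.sub_mul, Matrix.mul_smul, Matrix.smul_mul, smul_sub, smul_smul,
      Matrix.mul_zero, Matrix.zero_mul, Matrix.mul_one, hBBt,
      inv_mul_cancel₀ hn0, one_smul]
    have e1 : ((Q:ℝ)^2)⁻¹ * ((Q:ℝ)*(Q:ℝ)) = 1 := by
      field_simp
    have e2 : ((Q:ℝ)^2)⁻¹ * n⁻¹ * n = ((Q:ℝ)^2)⁻¹ := by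
      field_simp
    rw [e1, e2, one_smul, smul_zero]
    abel
  have hCinv : (B * Ninv * Bᵀ)⁻¹ = C := Matrix.inv_eq_right_inv hMC
  have main : Ninv * Bᵀ * (B * Ninv * Bᵀ)⁻¹ * B * Ninv = Ninv - n⁻¹ • J := by
    rw [hCinv, hC]
    simp only [Matrix.mul_smul, Matrix.smul_mul, Matrix.mul_sub, Matrix.sub_mul,
      Matrix.mul_assoc, r1, r2, r3, r4, r5, smul_sub, smul_smul,
      Matrix.mul_zero, Matrix.zero_mul, Matrix.mul_one, hNNi, hNiN,
      inv_mul_cancel₀ hn0, one_smul]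
    match_scalars <;> field_simp <;> (try ring) <;> tauto
  refine ⟨main, fun q k => ?_⟩
  rw [main]
  simp [hNinv, hJ, Matrix.sub_apply, Matrix.smul_apply, Matrix.diagonal_apply, smul_eq_mul]
end

section
/- If two real matrices A and B in ℝ^{p×m} satisfy A A' = B B', then there exists an orthogonal matrix Γ ∈ ℝ^{m×m} such that A = B Γ. -/
open Matrix
open scoped RealInnerProductSpace

/-- If `A, B ∈ ℝ^{p×m}` satisfy `A A' = B B'`, then there exists an orthogonal matrix
`Γ ∈ ℝ^{m×m}` (`Γ'Γ = ΓΓ' = I`) such that `A = B Γ`. -/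
theorem stmt2 (p m : ℕ) (hp : 0 < p) (hm : 0 < m)
    (A B : Matrix (Fin p) (Fin m) ℝ) (h : A * Aᵀ = B * Bᵀ) :
    ∃ Γ : Matrix (Fin m) (Fin m) ℝ, Γᵀ * Γ = 1 ∧ Γ * Γᵀ = 1 ∧ A = B * Γ := by
  classical
  set f : EuclideanSpace ℝ (Fin p) →ₗ[ℝ] EuclideanSpace ℝ (Fin m) := Matrix.toEuclideanLin Bᵀ with hf
  set g : EuclideanSpace ℝ (Fin p) →ₗ[ℝ] EuclideanSpace ℝ (Fin m) := Matrix.toEuclideanLin Aᵀ with hg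
  have inner_eq : ∀ x : EuclideanSpace ℝ (Fin p), (inner ℝ (g x) (g x) : ℝ) = inner ℝ (f x) (f x) := by
    intro x
    have e1 : ∀ (M : Matrix (Fin p) (Fin m) ℝ) (v : Fin p → ℝ),
        (Mᵀ *ᵥ v) ⬝ᵥ (Mᵀ *ᵥ v) = ((M * Mᵀ) *ᵥ v) ⬝ᵥ v := by
      intro M v
      rw [Matrix.dotProduct_mulVec, Matrix.vecMul_transpose, ← Matrix.mulVec_mulVec,
        dotProduct_comm, Matrix.dotProduct_mulVec]
    simp only [hg, hf, Matrix.toEuclideanLin_apply, PiLp.inner_apply, RCLike.inner_apply,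
      starRingEnd_apply, star_trivial]
    have := congrArg (fun M : Matrix (Fin p) (Fin p) ℝ => (M *ᵥ (WithLp.equiv 2 (Fin p → ℝ) x)) ⬝ᵥ (WithLp.equiv 2 (Fin p → ℝ) x)) h
    simp only [WithLp.equiv_apply] at this
    have hA := e1 A (WithLp.equiv 2 (Fin p → ℝ) x)
    have hB := e1 B (WithLp.equiv 2 (Fin p → ℝ) x)
    simp only [dotProduct] at hA hB this ⊢
    simp only [WithLp.equiv_apply] at hA hB
    rw [hA, hB, this]
  have norm_eq : ∀ x : EuclideanSpace ℝ (Fin p), ‖g x‖ = ‖f x‖ := by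
    intro x
    rw [← Real.sqrt_sq (norm_nonneg (g x)), ← Real.sqrt_sq (norm_nonneg (f x)),
      ← real_inner_self_eq_norm_sq, ← real_inner_self_eq_norm_sq, inner_eq]
  have hker : LinearMap.ker f ≤ LinearMap.ker g := by
    intro x hx
    have h0 : ‖g x‖ = 0 := by
      rw [norm_eq, LinearMap.mem_ker.mp hx, norm_zero]
    exact LinearMap.mem_ker.mpr (norm_eq_zero.mp h0)
  let q : (EuclideanSpace ℝ (Fin p) ⧸ LinearMap.ker f) →ₗ[ℝ] EuclideanSpace ℝ (Fin m) :=
    (LinearMap.ker f).liftQ g hker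
  let L0 : LinearMap.range f →ₗ[ℝ] EuclideanSpace ℝ (Fin m) :=
    q ∘ₗ (f.quotKerEquivRange.symm : LinearMap.range f →ₗ[ℝ] _)
  have hL0 : ∀ x : EuclideanSpace ℝ (Fin p),
      L0 ⟨f x, LinearMap.mem_range_self f x⟩ = g x := by
    intro x
    have h1 := f.quotKerEquivRange_symm_apply_image x (LinearMap.mem_range_self f x)
    simp only [L0, LinearMap.coe_comp, Function.comp_apply, LinearEquiv.coe_coe, h1]
    simp [q, Submodule.mkQ_apply, Submodule.liftQ_apply]
  let L : LinearMap.range f →ₗᵢ[ℝ] EuclideanSpace ℝ (Fin m) := by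
    refine ⟨L0, ?_⟩
    rintro ⟨v, x, rfl⟩
    rw [hL0, norm_eq]
    rfl
  let U := L.extend
  have hU : ∀ x : EuclideanSpace ℝ (Fin p), U (f x) = g x := by
    intro x
    have := L.extend_apply ⟨f x, LinearMap.mem_range_self f x⟩
    rw [show ((⟨f x, LinearMap.mem_range_self f x⟩ : LinearMap.range f) : EuclideanSpace ℝ (Fin m)) = f x from rfl] at this
    rw [this]
    exact hL0 x
  let G : Matrix (Fin m) (Fin m) ℝ := Matrix.toEuclideanLin.symm U.toLinearMap
  have hG : Matrix.toEuclideanLin G = U.toLinearMap := Matrix.toEuclideanLin.apply_symm_apply _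
  have hAB : Aᵀ = G * Bᵀ := by
    apply Matrix.toEuclideanLin.injective
    apply LinearMap.ext
    intro x
    have h1 : Matrix.toEuclideanLin (G * Bᵀ) x = Matrix.toEuclideanLin G (f x) := by
      simp [hf, Matrix.toEuclideanLin_apply, Matrix.mulVec_mulVec]
    rw [h1, hG]
    exact (hU x).symm
  have hGinner : ∀ v w : EuclideanSpace ℝ (Fin m),
      (inner ℝ (Matrix.toEuclideanLin G v) (Matrix.toEuclideanLin G w) : ℝ) = inner ℝ v w := by
    intro v w
    rw [hG]
    exact U.inner_map_map v w
  have hG1 : Gᵀ * G = 1 := by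
    ext i j
    have h2 := hGinner ((WithLp.equiv 2 (Fin m → ℝ)).symm (Pi.single i 1))
      ((WithLp.equiv 2 (Fin m → ℝ)).symm (Pi.single j 1))
    simp only [Matrix.toEuclideanLin_apply, PiLp.inner_apply, RCLike.inner_apply,
      starRingEnd_apply, star_trivial, WithLp.equiv_symm_apply, WithLp.ofLp_toLp,
      Equiv.apply_symm_apply, Matrix.mulVec_single, Pi.single_apply] at h2
    simp only [Matrix.mul_apply, Matrix.transpose_apply, Matrix.one_apply]
    simp only [mul_one, MulOpposite.op_one, one_smul, Matrix.col_apply] at h2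
    rw [Finset.sum_congr rfl (fun x _ => mul_comm (G x i) (G x j)), h2]
    simp [ite_mul, eq_comm]
  refine ⟨Gᵀ, ?_, ?_, ?_⟩
  · rw [Matrix.transpose_transpose]
    exact mul_eq_one_comm.mp hG1
  · exact hG1
  · calc A = (Aᵀ)ᵀ := by rw [Matrix.transpose_transpose]
      _ = (G * Bᵀ)ᵀ := by rw [hAB]
      _ = B * Gᵀ := by rw [Matrix.transpose_mul, Matrix.transpose_transpose]
end

section
/- For two symmetric random vectors φ and ψ in ℝ^m with finite second moments, if φ is more peaked than ψ (i.e., P(φ ∈ K) ≥ P(ψ ∈ K) for every symmetric convex set K ⊂ ℝ^m), then Cov(φ) ≤ Cov(ψ) in the Loewner order, i.e., Cov(ψ) − Cov(φ) is positive semi-definite. -/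
open MeasureTheory Matrix BigOperators

section aux
variable {m : ℕ}

lemma mean_zero (σ : Measure (Fin m → ℝ)) [IsProbabilityMeasure σ]
    (hs : σ.map (fun x => -x) = σ) (i : Fin m)
    (hi : Integrable (fun x : Fin m → ℝ => x i) σ) : (∫ x, x i ∂σ) = 0 := by
  have hmeas : Measurable fun x : Fin m → ℝ => -x := measurable_neg
  have h1 : (∫ x, x i ∂σ) = ∫ x, (-x) i ∂σ := by
    conv_lhs => rw [← hs]
    rw [integral_map hmeas.aemeasurable (by rw [hs]; exact hi.aestronglyMeasurable)]
  have h2 : (∫ x, (-x) i ∂σ) = - ∫ x, x i ∂σ := by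
    simp only [Pi.neg_apply]
    exact integral_neg _
  linarith [h1, h2]

lemma sq_expand (v : Fin m → ℝ) (x : Fin m → ℝ) :
    (∑ i, v i * x i) ^ 2 = ∑ i, ∑ j, (v i * v j) * (x i * x j) := by
  rw [pow_two, Finset.sum_mul_sum]
  refine Finset.sum_congr rfl fun i _ => Finset.sum_congr rfl fun j _ => by ring

lemma sq_integrable (σ : Measure (Fin m → ℝ)) (v : Fin m → ℝ)
    (hint2 : ∀ i j, Integrable (fun x : Fin m → ℝ => x i * x j) σ) :
    Integrable (fun x : Fin m → ℝ => (∑ i, v i * x i) ^ 2) σ := by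
  have : (fun x : Fin m → ℝ => (∑ i, v i * x i) ^ 2)
      = fun x => ∑ i, ∑ j, (v i * v j) * (x i * x j) := funext fun x => sq_expand v x
  rw [this]
  exact integrable_finset_sum _ fun i _ =>
    integrable_finset_sum _ fun j _ => (hint2 i j).const_mul _

lemma quad_eq (σ : Measure (Fin m → ℝ)) (v : Fin m → ℝ)
    (hint2 : ∀ i j, Integrable (fun x : Fin m → ℝ => x i * x j) σ) :
    (∫ x, (∑ i, v i * x i) ^ 2 ∂σ)
      = ∑ i, v i * ∑ j, (∫ x, x i * x j ∂σ) * v j := by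
  simp_rw [sq_expand v]
  rw [integral_finset_sum _ fun i _ =>
    integrable_finset_sum _ fun j _ => (hint2 i j).const_mul _]
  refine Finset.sum_congr rfl fun i _ => ?_
  rw [integral_finset_sum _ fun j _ => (hint2 i j).const_mul _, Finset.mul_sum]
  refine Finset.sum_congr rfl fun j _ => ?_
  rw [integral_const_mul]; ring

lemma sq_integral_le (σ τ : Measure (Fin m → ℝ)) [IsProbabilityMeasure σ] [IsProbabilityMeasure τ]
    (v : Fin m → ℝ)
    (hσ : Integrable (fun x : Fin m → ℝ => (∑ i, v i * x i) ^ 2) σ)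
    (hτ : Integrable (fun x : Fin m → ℝ => (∑ i, v i * x i) ^ 2) τ)
    (hpeak : ∀ K : Set (Fin m → ℝ), Convex ℝ K → K = -K → τ K ≤ σ K) :
    (∫ x, (∑ i, v i * x i) ^ 2 ∂σ) ≤ ∫ x, (∑ i, v i * x i) ^ 2 ∂τ := by
  set g : (Fin m → ℝ) → ℝ := fun x => ∑ i, v i * x i with hg
  have hglin : IsLinearMap ℝ g := by
    constructor
    · intro x y; simp [hg, mul_add, Finset.sum_add_distrib]
    · intro c x; simp [hg, Finset.mul_sum]; refine Finset.sum_congr rfl fun i _ => by ring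
  have hgmeas : Measurable g :=
    Finset.measurable_sum _ fun i _ => (measurable_pi_apply i).const_mul _
  have key : ∀ t : ℝ, σ {x | t < (g x) ^ 2} ≤ τ {x | t < (g x) ^ 2} := by
    intro t
    set K : Set (Fin m → ℝ) := {x | (g x) ^ 2 ≤ t} with hK
    have hconv : Convex ℝ K := by
      have h1 : Convex ℝ {y : ℝ | y ^ 2 ≤ t} := by
        have := (Even.convexOn_pow (𝕜 := ℝ) (n := 2) even_two).convex_le t
        simpa using this
      exact h1.is_linear_preimage hglin
    have hsymmK : K = -K := by
      ext x
      simp only [Set.mem_neg, hK, Set.mem_setOf_eq]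
      have : g (-x) = - g x := by
        simpa using hglin.map_smul (-1 : ℝ) x
      rw [this, neg_sq]
    have hKmeas : MeasurableSet K := (hgmeas.pow_const 2) measurableSet_Iic
    have hcompl : {x | t < (g x) ^ 2} = Kᶜ := by
      ext x; simp [hK, not_le]
    rw [hcompl, measure_compl hKmeas (measure_ne_top _ _),
      measure_compl hKmeas (measure_ne_top _ _), measure_univ, measure_univ]
    exact tsub_le_tsub_left (hpeak K hconv hsymmK) 1
  have hle : (∫⁻ x, ENNReal.ofReal ((g x) ^ 2) ∂σ) ≤ ∫⁻ x, ENNReal.ofReal ((g x) ^ 2) ∂τ := by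
    rw [lintegral_eq_lintegral_meas_lt σ (ae_of_all _ fun x => sq_nonneg _)
        ((hgmeas.pow_const 2).aemeasurable),
      lintegral_eq_lintegral_meas_lt τ (ae_of_all _ fun x => sq_nonneg _)
        ((hgmeas.pow_const 2).aemeasurable)]
    exact lintegral_mono fun t => key t
  rw [← ENNReal.ofReal_le_ofReal_iff (integral_nonneg fun x => sq_nonneg _),
    ofReal_integral_eq_lintegral_ofReal hσ (ae_of_all _ fun x => sq_nonneg _),
    ofReal_integral_eq_lintegral_ofReal hτ (ae_of_all _ fun x => sq_nonneg _)]
  exact hle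

end aux

/-- For symmetric random vectors (laws) `μ, ν` on `ℝ^m` with finite second moments,
if `μ` is more peaked than `ν` (i.e. `ν K ≤ μ K` for every symmetric convex `K`), then
`Cov(ν) − Cov(μ)` is positive semi-definite. -/
theorem stmt3 (m : ℕ) (μ ν : Measure (Fin m → ℝ))
    [IsProbabilityMeasure μ] [IsProbabilityMeasure ν]
    (hμsymm : μ.map (fun x => -x) = μ) (hνsymm : ν.map (fun x => -x) = ν)
    (hμint2 : ∀ i j, Integrable (fun x => x i * x j) μ)
    (hνint2 : ∀ i j, Integrable (fun x => x i * x j) ν)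
    (hμint1 : ∀ i, Integrable (fun x => x i) μ)
    (hνint1 : ∀ i, Integrable (fun x => x i) ν)
    (hpeak : ∀ K : Set (Fin m → ℝ), Convex ℝ K → K = -K → ν K ≤ μ K) :
    (Matrix.of fun i j =>
        ((∫ x, x i * x j ∂ν) - (∫ x, x i ∂ν) * (∫ x, x j ∂ν))
          - ((∫ x, x i * x j ∂μ) - (∫ x, x i ∂μ) * (∫ x, x j ∂μ))).PosSemidef := by
  have hμ0 : ∀ i, (∫ x, x i ∂μ) = 0 := fun i => mean_zero μ hμsymm i (hμint1 i)
  have hν0 : ∀ i, (∫ x, x i ∂ν) = 0 := fun i => mean_zero ν hνsymm i (hνint1 i)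
  have hM : (Matrix.of fun i j =>
        ((∫ x, x i * x j ∂ν) - (∫ x, x i ∂ν) * (∫ x, x j ∂ν))
          - ((∫ x, x i * x j ∂μ) - (∫ x, x i ∂μ) * (∫ x, x j ∂μ)))
      = Matrix.of fun i j => (∫ x, x i * x j ∂ν) - (∫ x, x i * x j ∂μ) := by
    ext i j; simp [hμ0, hν0]
  rw [hM]
  have hcomm : ∀ (σ : Measure (Fin m → ℝ)) (i j : Fin m),
      (∫ x, x j * x i ∂σ) = ∫ x, x i * x j ∂σ := fun σ i j =>
    integral_congr_ae (ae_of_all _ fun x => mul_comm _ _)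
  rw [posSemidef_iff_dotProduct_mulVec]
  constructor
  · ext i j
    simp only [conjTranspose_apply, of_apply, star_trivial, hcomm]
  · intro v
    have hstar : (star v : Fin m → ℝ) = v := rfl
    have hexp : star v ⬝ᵥ (Matrix.of fun i j =>
        (∫ x, x i * x j ∂ν) - (∫ x, x i * x j ∂μ)) *ᵥ v
        = (∑ i, v i * ∑ j, (∫ x, x i * x j ∂ν) * v j)
          - ∑ i, v i * ∑ j, (∫ x, x i * x j ∂μ) * v j := by
      simp only [hstar, dotProduct, mulVec, of_apply, sub_mul, mul_sub,
        Finset.sum_sub_distrib, Finset.mul_sum]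
    rw [hexp, ← quad_eq ν v hνint2, ← quad_eq μ v hμint2, sub_nonneg]
    exact sq_integral_le μ ν v (sq_integrable μ v hμint2) (sq_integrable ν v hνint2) hpeak
end

section
/- If ψ ∈ ℝ^m is central convex unimodal, then for any p ≥ 1 the random vector (ψ', 0_{p×1}')' ∈ ℝ^{m+p} obtained by appending p zero coordinates is central convex unimodal. -/
open MeasureTheory ProbabilityTheory Matrix BigOperators NNReal ENNReal

/-- Weak convergence of a sequence of measures to a measure: convergence of integrals of all
bounded continuous functions. -/
def WeakLimit {E : Type*} [TopologicalSpace E] [MeasurableSpace E]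
    (μs : ℕ → Measure E) (μ : Measure E) : Prop :=
  ∀ f : BoundedContinuousFunction E ℝ,
    Filter.Tendsto (fun n => ∫ x, f x ∂(μs n)) Filter.atTop (nhds (∫ x, f x ∂μ))

/-- A set of measures is closed convex if it is closed under convex mixtures and under weak
sequential limits (of probability measures). -/
def IsClosedConvexMeasureSet {E : Type*} [TopologicalSpace E] [MeasurableSpace E]
    (B : Set (Measure E)) : Prop :=
  (∀ μ ∈ B, ∀ ν ∈ B, ∀ t : ℝ≥0∞, t ≤ 1 → t • μ + (1 - t) • ν ∈ B) ∧
  (∀ μs : ℕ → Measure E, (∀ n, μs n ∈ B) →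
    ∀ μ : Measure E, IsProbabilityMeasure μ → WeakLimit μs μ → μ ∈ B)

/-- The set of uniform distributions on symmetric convex bodies of `ℝ^m` (compact convex sets
with nonempty interior, symmetric about the origin). -/
def uniformBodies (m : ℕ) : Set (Measure (Fin m → ℝ)) :=
  {μ | ∃ K : Set (Fin m → ℝ), IsCompact K ∧ Convex ℝ K ∧ (interior K).Nonempty ∧
        K = -K ∧ μ = (volume : Measure (Fin m → ℝ))[|K]}

/-- A distribution on `ℝ^m` is central convex unimodal if it belongs to the closed convex hull
of the uniform distributions on symmetric convex bodies, i.e. to every closed convex set of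
measures containing them. -/
def IsCCU {m : ℕ} (μ : Measure (Fin m → ℝ)) : Prop :=
  ∀ B : Set (Measure (Fin m → ℝ)), IsClosedConvexMeasureSet B → uniformBodies m ⊆ B → μ ∈ B

/-- Sherman's peakedness ordering: `μ` is more peaked than `ν` if `μ K ≥ ν K` for every
symmetric convex set `K`. -/
def MorePeaked {m : ℕ} (μ ν : Measure (Fin m → ℝ)) : Prop :=
  ∀ K : Set (Fin m → ℝ), Convex ℝ K → K = -K → ν K ≤ μ K

noncomputable def eMeas (m p : ℕ) : ((Fin m → ℝ) × (Fin p → ℝ)) ≃ᵐ (Fin (m+p) → ℝ) :=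
  (MeasurableEquiv.sumPiEquivProdPi (fun _ : Fin m ⊕ Fin p => ℝ)).symm.trans
    (MeasurableEquiv.piCongrLeft (fun _ => ℝ) finSumFinEquiv)

lemma eMeas_apply (m p : ℕ) (x : Fin m → ℝ) (y : Fin p → ℝ) :
    eMeas m p (x, y) = Fin.append x y := by
  funext i
  induction i using Fin.addCases with
  | left i =>
      have h := Equiv.piCongrLeft_sumInl (fun _ : Fin (m+p) => ℝ) finSumFinEquiv x y i
      simp only [finSumFinEquiv_apply_left] at h
      simpa [eMeas, MeasurableEquiv.trans, MeasurableEquiv.piCongrLeft,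
        MeasurableEquiv.sumPiEquivProdPi, Fin.append_left] using h
  | right i =>
      have h := Equiv.piCongrLeft_sumInr (fun _ : Fin (m+p) => ℝ) finSumFinEquiv x y i
      simp only [finSumFinEquiv_apply_right] at h
      simpa [eMeas, MeasurableEquiv.trans, MeasurableEquiv.piCongrLeft,
        MeasurableEquiv.sumPiEquivProdPi, Fin.append_right] using h

lemma eMeas_mp (m p : ℕ) : MeasurePreserving (eMeas m p) volume volume := by
  have := (volume_measurePreserving_piCongrLeft (fun _ : Fin (m+p) => ℝ)
      finSumFinEquiv).comp
    (volume_measurePreserving_sumPiEquivProdPi_symm (fun _ : Fin m ⊕ Fin p => ℝ))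
  simpa [eMeas, MeasurableEquiv.coe_trans] using this

lemma prod_smul_smul {α β : Type*} [MeasurableSpace α] [MeasurableSpace β]
    (μ : Measure α) (ν : Measure β) [SFinite μ] [SFinite ν] (c d : ℝ≥0∞) (hd : d ≠ ∞) :
    (c • μ).prod (d • ν) = (c * d) • μ.prod ν := by
  ext s hs
  rw [Measure.prod_apply hs, Measure.smul_apply, Measure.prod_apply hs,
    lintegral_smul_measure]
  simp only [Measure.smul_apply, smul_eq_mul]
  rw [lintegral_const_mul' _ _ hd, ← mul_assoc]

lemma cond_prod_cond {α β : Type*} [MeasureSpace α] [MeasureSpace β]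
    [SFinite (volume : Measure α)] [SFinite (volume : Measure β)]
    (K : Set α) (C : Set β) (hK : volume K ≠ ∞) (hC0 : volume C ≠ 0) (hC : volume C ≠ ∞) :
    ((volume : Measure α)[|K]).prod ((volume : Measure β)[|C])
      = (volume : Measure (α × β))[|K ×ˢ C] := by
  rw [ProbabilityTheory.cond, ProbabilityTheory.cond,
    prod_smul_smul _ _ _ _ (by simpa using hC0), Measure.prod_restrict,
    ProbabilityTheory.cond, Measure.volume_eq_prod, Measure.prod_prod,
    ENNReal.mul_inv (Or.inr hC) (Or.inl hK)]

lemma map_cond {α β : Type*} [MeasureSpace α] [MeasureSpace β] (e : α ≃ᵐ β)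
    (hmp : MeasurePreserving e volume volume) (s : Set α) (hs : MeasurableSet (e '' s)) :
    Measure.map e (volume[|s]) = volume[|e '' s] := by
  rw [ProbabilityTheory.cond, ProbabilityTheory.cond, Measure.map_smul]
  congr 1
  · rw [← hmp.map_eq, MeasurableEquiv.map_apply, Set.preimage_image_eq _ e.injective]
  · rw [← hmp.map_eq, Measure.restrict_map e.measurable hs,
      Set.preimage_image_eq _ e.injective]

lemma ball_vol_pos (p n : ℕ) :
    (volume : Measure (Fin p → ℝ)) (Metric.closedBall 0 (1/(n+1))) ≠ 0 :=
  ne_of_gt (Metric.measure_closedBall_pos _ _ (by positivity))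

lemma ball_vol_ne_top (p n : ℕ) :
    (volume : Measure (Fin p → ℝ)) (Metric.closedBall 0 (1/(n+1))) ≠ ∞ :=
  (isCompact_closedBall _ _).measure_ne_top

instance ball_cond_prob (p n : ℕ) :
    IsProbabilityMeasure ((volume : Measure (Fin p → ℝ))[|Metric.closedBall 0 (1/(n+1))]) :=
  cond_isProbabilityMeasure_of_finite (ball_vol_pos p n) (ball_vol_ne_top p n)

lemma ae_mem_ball (p n : ℕ) :
    ∀ᵐ y ∂((volume : Measure (Fin p → ℝ))[|Metric.closedBall 0 (1/(n+1))]),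
      y ∈ Metric.closedBall (0 : Fin p → ℝ) (1/(n+1)) := by
  rw [Filter.eventually_iff, MeasureTheory.mem_ae_iff]
  rw [cond_apply Metric.isClosed_closedBall.measurableSet]
  have : Metric.closedBall (0 : Fin p → ℝ) (1/(n+1)) ∩
      {x | x ∈ Metric.closedBall (0 : Fin p → ℝ) (1/(n+1))}ᶜ = ∅ := by
    ext z; simp (config := {contextual := true})
  rw [this, measure_empty, mul_zero]

lemma tendsto_cond_ball (p : ℕ) (φ : BoundedContinuousFunction (Fin p → ℝ) ℝ) :
    Filter.Tendsto
      (fun n : ℕ => ∫ y, φ y ∂((volume : Measure (Fin p → ℝ))[|Metric.closedBall 0 (1/(n+1))]))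
      Filter.atTop (nhds (φ 0)) := by
  rw [Metric.tendsto_atTop]
  intro ε hε
  obtain ⟨δ, hδ0, hδ⟩ := Metric.continuousAt_iff.mp (φ.continuous.continuousAt (x := 0))
    (ε/2) (by positivity)
  obtain ⟨N, hN⟩ := exists_nat_one_div_lt hδ0
  refine ⟨N, fun n hn => ?_⟩
  set ν := (volume : Measure (Fin p → ℝ))[|Metric.closedBall 0 (1/(n+1))]
  have hr : (1:ℝ)/(n+1) < δ := by
    refine lt_of_le_of_lt ?_ hN
    apply one_div_le_one_div_of_le (by positivity)
    exact_mod_cast Nat.succ_le_succ hn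
  have hint : Integrable (fun y => φ y) ν := φ.integrable ν
  have key : ∫ y, φ y ∂ν - φ 0 = ∫ y, (φ y - φ 0) ∂ν := by
    rw [integral_sub hint (integrable_const _)]
    simp
  rw [Real.dist_eq, ← Real.norm_eq_abs, key]
  have hb : ∀ᵐ y ∂ν, ‖φ y - φ 0‖ ≤ ε/2 := by
    filter_upwards [ae_mem_ball p n] with y hy
    have : dist y 0 < δ := lt_of_le_of_lt (Metric.mem_closedBall.mp hy) hr
    have := hδ this
    rw [Real.dist_eq] at this
    exact le_of_lt (by simpa [Real.norm_eq_abs] using this)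
  calc ‖∫ y, (φ y - φ 0) ∂ν‖ ≤ ε/2 * (ν Set.univ).toReal :=
        norm_integral_le_of_norm_le_const hb
    _ = ε/2 := by simp
    _ < ε := by linarith

lemma eMeas_coe (m p : ℕ) :
    ⇑(eMeas m p) = fun q : (Fin m → ℝ) × (Fin p → ℝ) => Fin.append q.1 q.2 :=
  funext fun q => by cases q; exact eMeas_apply m p _ _

lemma main_tendsto (m p : ℕ) (K : Set (Fin m → ℝ)) (hKm : MeasurableSet K)
    (hK0 : volume K ≠ 0) (hKt : volume K ≠ ∞)
    (f : BoundedContinuousFunction (Fin (m+p) → ℝ) ℝ) :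
    Filter.Tendsto
      (fun n : ℕ => ∫ z, f z ∂((volume : Measure (Fin (m+p) → ℝ))[|
        eMeas m p '' (K ×ˢ Metric.closedBall 0 (1/(n+1)))]))
      Filter.atTop
      (nhds (∫ z, f z ∂(((volume : Measure (Fin m → ℝ))[|K]).map
        (fun x => Fin.append x (0 : Fin p → ℝ))))) := by
  have hT := eMeas_mp m p
  have hμK : IsProbabilityMeasure ((volume : Measure (Fin m → ℝ))[|K]) :=
    cond_isProbabilityMeasure_of_finite hK0 hKt
  set C : ℕ → Set (Fin p → ℝ) := fun n => Metric.closedBall 0 (1/(n+1)) with hC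
  set ν : ℕ → Measure (Fin p → ℝ) := fun n => volume[|C n] with hν
  have hνp : ∀ n, IsProbabilityMeasure (ν n) := fun n => ball_cond_prob p n
  set F : BoundedContinuousFunction ((Fin m → ℝ) × (Fin p → ℝ)) ℝ :=
    f.compContinuous ⟨fun q => Fin.append q.1 q.2, Fin.continuous_append m p⟩ with hF
  -- rewrite each term
  have hterm : ∀ n : ℕ, ∫ z, f z ∂((volume : Measure (Fin (m+p) → ℝ))[|
      eMeas m p '' (K ×ˢ C n)])
      = ∫ x, (∫ y, F (x, y) ∂(ν n)) ∂(volume[|K]) := by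
    intro n
    have hmeas : MeasurableSet (eMeas m p '' (K ×ˢ C n)) :=
      (MeasurableEquiv.measurableSet_image (eMeas m p)).mpr
        (hKm.prod Metric.isClosed_closedBall.measurableSet)
    have h1 : (volume : Measure (Fin (m+p) → ℝ))[|eMeas m p '' (K ×ˢ C n)]
        = Measure.map (eMeas m p) ((volume[|K]).prod (ν n)) := by
      rw [hν, hC, cond_prod_cond K (C n) hKt (ball_vol_pos p n) (ball_vol_ne_top p n),
        map_cond (eMeas m p) hT _ hmeas]
    rw [h1, MeasureTheory.integral_map_equiv (eMeas m p) f]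
    have hFi : Integrable (fun q => f (eMeas m p q)) ((volume[|K]).prod (ν n)) := by
      have := F.integrable ((volume[|K]).prod (ν n))
      simpa [hF, eMeas_coe m p, Function.comp_def] using this
    rw [MeasureTheory.integral_prod _ hFi]
    congr 1
    ext x
    congr 1
    ext y
    simp [hF, eMeas_apply]
  refine (Filter.tendsto_congr hterm).mpr ?_
  -- dominated convergence
  have hlim : ∀ x : Fin m → ℝ,
      Filter.Tendsto (fun n => ∫ y, F (x, y) ∂(ν n)) Filter.atTop
        (nhds (f (Fin.append x (0 : Fin p → ℝ)))) := by
    intro x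
    have := tendsto_cond_ball p
      (F.compContinuous ⟨fun y => ((x, y) : (Fin m → ℝ) × (Fin p → ℝ)),
        (Continuous.prodMk_right x)⟩)
    simpa [hF, hν, hC, one_div] using this
  have hmeasF : ∀ n : ℕ, AEStronglyMeasurable (fun x => ∫ y, F (x, y) ∂(ν n))
      (volume[|K]) := fun n =>
    (F.continuous.stronglyMeasurable.integral_prod_right').aestronglyMeasurable
  have hbound : ∀ n : ℕ, ∀ᵐ x ∂(volume[|K]), ‖∫ y, F (x, y) ∂(ν n)‖ ≤ ‖f‖ := by
    intro n
    refine Filter.Eventually.of_forall fun x => ?_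
    calc ‖∫ y, F (x, y) ∂(ν n)‖ ≤ ‖f‖ * ((ν n) Set.univ).toReal :=
          norm_integral_le_of_norm_le_const
            (Filter.Eventually.of_forall fun y => by
              simpa [hF] using f.norm_coe_le_norm _)
      _ = ‖f‖ := by simp
  have hDCT := MeasureTheory.tendsto_integral_of_dominated_convergence
    (μ := (volume : Measure (Fin m → ℝ))[|K])
    (F := fun n x => ∫ y, F (x, y) ∂(ν n))
    (f := fun x => f (Fin.append x (0 : Fin p → ℝ)))
    (bound := fun _ => ‖f‖) hmeasF (integrable_const _)
    hbound (Filter.Eventually.of_forall hlim)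
  have hfin : ∫ z, f z ∂(((volume : Measure (Fin m → ℝ))[|K]).map
      (fun x => Fin.append x (0 : Fin p → ℝ)))
      = ∫ x, f (Fin.append x (0 : Fin p → ℝ)) ∂(volume[|K]) := by
    rw [integral_map _ f.continuous.aestronglyMeasurable]
    exact ((Fin.continuous_append m p).comp
      (continuous_id.prodMk continuous_const)).aemeasurable
  rw [hfin]
  exact hDCT

lemma append_neg (m p : ℕ) (x : Fin m → ℝ) (y : Fin p → ℝ) :
    Fin.append (-x) (-y) = -(Fin.append x y) := by
  funext i
  induction i using Fin.addCases <;> simp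

lemma body_compact (m p : ℕ) {K : Set (Fin m → ℝ)} (hKc : IsCompact K) (r : ℝ) :
    IsCompact (eMeas m p '' (K ×ˢ Metric.closedBall 0 r)) := by
  rw [eMeas_coe]
  exact (hKc.prod (isCompact_closedBall _ _)).image (Fin.continuous_append m p)

noncomputable def appendL (m p : ℕ) : ((Fin m → ℝ) × (Fin p → ℝ)) →ₗ[ℝ] (Fin (m+p) → ℝ) where
  toFun q := Fin.append q.1 q.2
  map_add' a b := by
    funext i
    induction i using Fin.addCases <;> simp
  map_smul' c a := by
    funext i
    induction i using Fin.addCases <;> simp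

lemma body_convex (m p : ℕ) {K : Set (Fin m → ℝ)} (hKconv : Convex ℝ K) (r : ℝ) :
    Convex ℝ (eMeas m p '' (K ×ˢ Metric.closedBall 0 r)) := by
  rw [eMeas_coe]
  exact (hKconv.prod (convex_closedBall _ _)).linear_image (appendL m p)

lemma body_interior (m p : ℕ) {K : Set (Fin m → ℝ)} (hKint : (interior K).Nonempty)
    (r : ℝ) (hr : 0 < r) :
    (interior (eMeas m p '' (K ×ˢ Metric.closedBall 0 r))).Nonempty := by
  rw [eMeas_coe]
  obtain ⟨x0, hx0⟩ := hKint
  have hA : ⇑(Fin.appendHomeomorph (X := ℝ) m p)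
      = fun q : (Fin m → ℝ) × (Fin p → ℝ) => Fin.append q.1 q.2 := rfl
  have hopen : IsOpen ((fun q : (Fin m → ℝ) × (Fin p → ℝ) => Fin.append q.1 q.2) ''
      (interior K ×ˢ Metric.ball 0 r)) := by
    rw [← hA]
    exact (Fin.appendHomeomorph m p).isOpenMap _ (isOpen_interior.prod Metric.isOpen_ball)
  have hsub : (fun q : (Fin m → ℝ) × (Fin p → ℝ) => Fin.append q.1 q.2) ''
      (interior K ×ˢ Metric.ball 0 r) ⊆
      (fun q : (Fin m → ℝ) × (Fin p → ℝ) => Fin.append q.1 q.2) '' (K ×ˢ Metric.closedBall 0 r) :=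
    Set.image_mono (Set.prod_mono interior_subset Metric.ball_subset_closedBall)
  refine Set.Nonempty.mono (interior_maximal hsub hopen) ?_
  exact ⟨_, ⟨(x0, 0), ⟨hx0, Metric.mem_ball_self hr⟩, rfl⟩⟩

lemma body_symm (m p : ℕ) {K : Set (Fin m → ℝ)} (hKsymm : K = -K) (r : ℝ) :
    eMeas m p '' (K ×ˢ Metric.closedBall 0 r)
      = -(eMeas m p '' (K ×ˢ Metric.closedBall 0 r)) := by
  rw [eMeas_coe]
  set S := (fun q : (Fin m → ℝ) × (Fin p → ℝ) => Fin.append q.1 q.2) ''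
    (K ×ˢ Metric.closedBall 0 r) with hS
  have hneg : ∀ z ∈ S, -z ∈ S := by
    rintro _ ⟨⟨x, y⟩, ⟨hx, hy⟩, rfl⟩
    refine ⟨(-x, -y), ⟨?_, ?_⟩, append_neg m p x y⟩
    · rw [hKsymm]; simpa using hx
    · simpa using hy
  ext z
  constructor
  · intro hz
    rw [Set.mem_neg]
    exact hneg z hz
  · intro hz
    rw [Set.mem_neg] at hz
    simpa using hneg _ hz

lemma vol_pos_of_interior {m : ℕ} {K : Set (Fin m → ℝ)} (h : (interior K).Nonempty) :
    (volume : Measure (Fin m → ℝ)) K ≠ 0 := by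
  intro h0
  have h1 : (volume : Measure (Fin m → ℝ)) (interior K) = 0 :=
    le_antisymm (le_trans (measure_mono interior_subset) h0.le) zero_le
  exact (isOpen_interior.measure_pos volume h).ne' h1

/-- If `ψ` on `ℝ^m` is central convex unimodal, then for any `p ≥ 1` the vector
`(ψ', 0_{p×1}')' ∈ ℝ^{m+p}` obtained by appending `p` zero coordinates is central convex
unimodal. -/
theorem stmt10 (m p : ℕ) (hp : 1 ≤ p) (μ : Measure (Fin m → ℝ)) [IsProbabilityMeasure μ]
    (hμ : IsCCU μ) :
    IsCCU (μ.map (fun x => Fin.append x (0 : Fin p → ℝ))) := by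
  intro B' hB' hUB'
  set f0 : (Fin m → ℝ) → (Fin (m+p) → ℝ) := fun x => Fin.append x (0 : Fin p → ℝ) with hf0
  have hf0c : Continuous f0 :=
    (Fin.continuous_append m p).comp (continuous_id.prodMk continuous_const)
  have hf0m : Measurable f0 := hf0c.measurable
  set B : Set (Measure (Fin m → ℝ)) := {ν | ν.map f0 ∈ B'} with hB
  have hint : ∀ (ρ : Measure (Fin m → ℝ)) (g : BoundedContinuousFunction (Fin (m+p) → ℝ) ℝ),
      ∫ z, g z ∂(ρ.map f0) = ∫ x, g (f0 x) ∂ρ := fun ρ g =>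
    integral_map hf0m.aemeasurable g.continuous.aestronglyMeasurable
  have hBclosed : IsClosedConvexMeasureSet B := by
    constructor
    · intro ν₁ h1 ν₂ h2 t ht
      have hmix : (t • ν₁ + (1 - t) • ν₂).map f0 = t • ν₁.map f0 + (1 - t) • ν₂.map f0 := by
        rw [Measure.map_add _ _ hf0m, Measure.map_smul, Measure.map_smul]
      show (t • ν₁ + (1 - t) • ν₂).map f0 ∈ B'
      rw [hmix]
      exact hB'.1 _ h1 _ h2 t ht
    · intro μs hμs ν hν hwl
      show ν.map f0 ∈ B'
      refine hB'.2 (fun n => (μs n).map f0) hμs (ν.map f0) ?_ ?_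
      · exact Measure.isProbabilityMeasure_map hf0m.aemeasurable
      · intro g
        simp only [hint]
        have := hwl (g.compContinuous ⟨f0, hf0c⟩)
        simpa using this
  have hUB : uniformBodies m ⊆ B := by
    rintro ρ ⟨K, hKc, hKconv, hKint, hKsymm, rfl⟩
    show ((volume : Measure (Fin m → ℝ))[|K]).map f0 ∈ B'
    have hK0 : (volume : Measure (Fin m → ℝ)) K ≠ 0 := vol_pos_of_interior hKint
    have hKt : (volume : Measure (Fin m → ℝ)) K ≠ ∞ := hKc.measure_ne_top
    have hKm : MeasurableSet K := hKc.isClosed.measurableSet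
    have hpK : IsProbabilityMeasure ((volume : Measure (Fin m → ℝ))[|K]) :=
      cond_isProbabilityMeasure_of_finite hK0 hKt
    refine hB'.2
      (fun n => (volume : Measure (Fin (m+p) → ℝ))[|
        eMeas m p '' (K ×ˢ Metric.closedBall 0 (1/(n+1)))]) ?_ _ ?_ ?_
    · intro n
      exact hUB' ⟨_, body_compact m p hKc _, body_convex m p hKconv _,
        body_interior m p hKint _ (by positivity), body_symm m p hKsymm _, rfl⟩
    · exact Measure.isProbabilityMeasure_map hf0m.aemeasurable
    · intro g
      have := main_tendsto m p K hKm hK0 hKt g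
      exact this
  exact hμ B hBclosed hUB
end

section
/- Let ε₀, η ~ N(0,1) be independent standard Gaussians, a ≥ 0, c ≥ 0, and 1 ≥ ρ ≥ ρ̃ ≥ 0. Then P(|√(1−ρ²)·ε₀ + ρ·η| ≤ c | η² ≤ a) ≥ P(|√(1−ρ̃²)·ε₀ + ρ̃·η| ≤ c | η² ≤ a). -/
open MeasureTheory ProbabilityTheory

noncomputable section

open Real Set Filter Metric intervalIntegral Topology

namespace Stmt15

def gpdf (x : ℝ) : ℝ := (Real.sqrt (2 * π))⁻¹ * Real.exp (-x ^ 2 / 2)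


lemma gpdf_eq : gaussianPDFReal 0 1 = gpdf := by
  ext x
  simp [gaussianPDFReal, gpdf]

lemma gpdf_nonneg (x : ℝ) : 0 ≤ gpdf x := by
  unfold gpdf; positivity

lemma gpdf_le (x : ℝ) : gpdf x ≤ (Real.sqrt (2 * π))⁻¹ := by
  unfold gpdf
  nth_rewrite 2 [← mul_one (Real.sqrt (2*π))⁻¹]
  apply mul_le_mul_of_nonneg_left _ (by positivity)
  rw [Real.exp_le_one_iff]
  nlinarith [sq_nonneg x]

lemma continuous_gpdf : Continuous gpdf := by
  unfold gpdf
  fun_prop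

lemma gpdf_neg (x : ℝ) : gpdf (-x) = gpdf x := by simp [gpdf]

lemma intervalIntegrable_gpdf {p q : ℝ} : IntervalIntegrable gpdf volume p q :=
  continuous_gpdf.intervalIntegrable p q

lemma integrable_gpdf : Integrable gpdf := by
  rw [← gpdf_eq]; exact integrable_gaussianPDFReal 0 1

lemma integral_gpdf : ∫ x, gpdf x = 1 := by
  rw [← gpdf_eq]; exact integral_gaussianPDFReal_eq_one 0 one_ne_zero


/-- sqrt(1-ρ²) -/
def sr (ρ : ℝ) : ℝ := Real.sqrt (1 - ρ ^ 2)

lemma sr_pos {ρ : ℝ} (h : ρ ^ 2 < 1) : 0 < sr ρ := Real.sqrt_pos.2 (by linarith)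

lemma sr_sq {ρ : ℝ} (h : ρ ^ 2 ≤ 1) : sr ρ ^ 2 = 1 - ρ ^ 2 :=
  Real.sq_sqrt (by linarith)

def UU (c ρ y : ℝ) : ℝ := (c - ρ * y) / sr ρ
def LL (c ρ y : ℝ) : ℝ := (-c - ρ * y) / sr ρ

lemma LL_le_UU {c ρ y : ℝ} (hc : 0 ≤ c) (h : ρ ^ 2 < 1) : LL c ρ y ≤ UU c ρ y := by
  exact (div_le_div_iff_of_pos_right (sr_pos h)).mpr (by linarith)

def KK (c ρ y : ℝ) : ℝ := ∫ x in LL c ρ y..UU c ρ y, gpdf x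

def Psi (t : ℝ) : ℝ := ∫ x in (0:ℝ)..t, gpdf x

end Stmt15

namespace Stmt15

lemma hasDerivAt_Psi (t : ℝ) : HasDerivAt Psi (gpdf t) t :=
  intervalIntegral.integral_hasDerivAt_right intervalIntegrable_gpdf
    (continuous_gpdf.stronglyMeasurableAtFilter _ _)
    continuous_gpdf.continuousAt

lemma continuous_Psi : Continuous Psi :=
  continuous_iff_continuousAt.2 fun t => (hasDerivAt_Psi t).continuousAt

lemma KK_eq (c ρ y : ℝ) : KK c ρ y = Psi (UU c ρ y) - Psi (LL c ρ y) :=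
  (intervalIntegral.integral_interval_sub_left intervalIntegrable_gpdf
    intervalIntegrable_gpdf).symm

lemma continuous_UU_y (c ρ : ℝ) : Continuous (fun y => UU c ρ y) := by
  unfold UU; fun_prop

lemma continuous_LL_y (c ρ : ℝ) : Continuous (fun y => LL c ρ y) := by
  unfold LL; fun_prop

lemma continuous_KK_y (c ρ : ℝ) : Continuous (fun y => KK c ρ y) := by
  simp only [KK_eq]
  exact (continuous_Psi.comp (continuous_UU_y c ρ)).sub
    (continuous_Psi.comp (continuous_LL_y c ρ))

lemma hasDerivAt_sr {ρ : ℝ} (h : ρ ^ 2 < 1) : HasDerivAt sr (-ρ / sr ρ) ρ := by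
  have h1 : HasDerivAt (fun ρ : ℝ => 1 - ρ ^ 2) (-(2 * ρ)) ρ := by
    simpa using (hasDerivAt_pow 2 ρ).const_sub 1
  have h2 := (Real.hasDerivAt_sqrt (by nlinarith : (1:ℝ) - ρ ^ 2 ≠ 0)).comp ρ h1
  refine h2.congr_deriv (Eq.symm ?_)
  have hs : sr ρ ≠ 0 := (sr_pos h).ne'
  unfold sr at *
  field_simp

lemma hasDerivAt_UU (c y : ℝ) {ρ : ℝ} (h : ρ ^ 2 < 1) :
    HasDerivAt (fun ρ => UU c ρ y) ((ρ * c - y) / sr ρ ^ 3) ρ := by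
  have hnum : HasDerivAt (fun ρ : ℝ => c - ρ * y) (-y) ρ := by
    simpa using (hasDerivAt_mul_const y).const_sub c
  have h2 := hnum.div (hasDerivAt_sr h) (sr_pos h).ne'
  refine h2.congr_deriv (Eq.symm ?_)
  have hs : sr ρ ≠ 0 := (sr_pos h).ne'
  have hs2 : sr ρ ^ 2 = 1 - ρ ^ 2 := sr_sq h.le
  field_simp
  linear_combination y * hs2

def DD (c ρ y : ℝ) : ℝ :=
  (gpdf (UU c ρ y) * (ρ * c - y) + gpdf (LL c ρ y) * (ρ * c + y)) / sr ρ ^ 3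

lemma hasDerivAt_KK (c y : ℝ) {ρ : ℝ} (h : ρ ^ 2 < 1) :
    HasDerivAt (fun ρ => KK c ρ y) (DD c ρ y) ρ := by
  have hL : HasDerivAt (fun ρ => LL c ρ y) ((ρ * (-c) - y) / sr ρ ^ 3) ρ := hasDerivAt_UU (-c) y h
  have hU := hasDerivAt_UU c y h
  have h2 := ((hasDerivAt_Psi (UU c ρ y)).comp ρ hU).sub ((hasDerivAt_Psi (LL c ρ y)).comp ρ hL)
  have he : (fun ρ => KK c ρ y) = fun ρ => Psi (UU c ρ y) - Psi (LL c ρ y) := by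
    funext ρ; exact KK_eq c ρ y
  rw [he]
  refine h2.congr_deriv (Eq.symm ?_)
  unfold DD
  ring

end Stmt15

namespace Stmt15

def FF (a c ρ : ℝ) : ℝ := ∫ y in (-Real.sqrt a)..(Real.sqrt a), KK c ρ y * gpdf y

lemma continuous_DD_y (c ρ : ℝ) : Continuous (fun y => DD c ρ y) := by
  unfold DD
  exact (((continuous_gpdf.comp (continuous_UU_y c ρ)).mul (by fun_prop)).add
    ((continuous_gpdf.comp (continuous_LL_y c ρ)).mul (by fun_prop))).div_const _

lemma hasDerivAt_FF (a c : ℝ) {ρ₀ : ℝ} (hρ0 : 0 ≤ ρ₀) (hρ1 : ρ₀ < 1) :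
    HasDerivAt (FF a c)
      (∫ y in (-Real.sqrt a)..(Real.sqrt a), DD c ρ₀ y * gpdf y) ρ₀ := by
  set b := Real.sqrt a
  set ε : ℝ := (1 - ρ₀) / 2 with hε
  have hεpos : 0 < ε := by simp [hε]; linarith
  set r : ℝ := (1 + ρ₀) / 2 with hr
  have hr1 : r < 1 := by simp [hr]; linarith
  have hr0 : 0 < r := by simp [hr]; linarith
  set m : ℝ := Real.sqrt (1 - r ^ 2) with hm
  have hmpos : 0 < m := Real.sqrt_pos.2 (by nlinarith)
  have hball : ∀ ρ ∈ Metric.ball ρ₀ ε, ρ ^ 2 < 1 ∧ m ≤ sr ρ := by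
    intro ρ hρ
    rw [Metric.mem_ball, Real.dist_eq, abs_lt] at hρ
    have h1 : ρ < r := by rw [hr]; linarith
    have h2 : -r < ρ := by rw [hr]; linarith
    have hρ2 : ρ ^ 2 < r ^ 2 := by nlinarith
    refine ⟨by nlinarith, ?_⟩
    exact Real.sqrt_le_sqrt (by nlinarith)
  set C : ℝ := (Real.sqrt (2 * π))⁻¹ with hC
  have hCpos : 0 < C := by rw [hC]; positivity
  have key := intervalIntegral.hasDerivAt_integral_of_dominated_loc_of_deriv_le
      (F := fun ρ y => KK c ρ y * gpdf y) (F' := fun ρ y => DD c ρ y * gpdf y)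
      (x₀ := ρ₀) (a := -b) (b := b)
      (bound := fun y => 2 * C * C * (|c| + |y|) / m ^ 3)
      (Metric.ball_mem_nhds ρ₀ hεpos)
      (Filter.Eventually.of_forall fun ρ =>
        ((continuous_KK_y c ρ).mul continuous_gpdf).aestronglyMeasurable.restrict)
      (((continuous_KK_y c ρ₀).mul continuous_gpdf).intervalIntegrable (μ := volume) _ _)
      (((continuous_DD_y c ρ₀).mul continuous_gpdf).aestronglyMeasurable.restrict)
      ?_ ?_ ?_
  · unfold FF; exact key.2
  · -- bound
    refine Filter.Eventually.of_forall fun y _ ρ hρ => ?_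
    obtain ⟨hρ2, hmsr⟩ := hball ρ hρ
    have hsrpos : 0 < sr ρ := sr_pos hρ2
    have hρabs : |ρ| ≤ 1 := by
      rw [abs_le]; constructor <;> nlinarith [sq_nonneg ρ]
    have hb1 : |gpdf (UU c ρ y) * (ρ * c - y) + gpdf (LL c ρ y) * (ρ * c + y)|
        ≤ 2 * C * (|c| + |y|) := by
      have g1 := gpdf_le (UU c ρ y)
      have g2 := gpdf_le (LL c ρ y)
      have g1' := gpdf_nonneg (UU c ρ y)
      have g2' := gpdf_nonneg (LL c ρ y)
      have e1 : |ρ * c - y| ≤ |c| + |y| := by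
        calc |ρ * c - y| ≤ |ρ * c| + |y| := abs_sub _ _
        _ ≤ |c| + |y| := by
            rw [abs_mul]
            have : |ρ| * |c| ≤ 1 * |c| := by
              apply mul_le_mul_of_nonneg_right hρabs (abs_nonneg c)
            linarith
      have e2 : |ρ * c + y| ≤ |c| + |y| := by
        calc |ρ * c + y| ≤ |ρ * c| + |y| := abs_add_le _ _
        _ ≤ |c| + |y| := by
            rw [abs_mul]
            have : |ρ| * |c| ≤ 1 * |c| := by
              apply mul_le_mul_of_nonneg_right hρabs (abs_nonneg c)
            linarith
      calc |gpdf (UU c ρ y) * (ρ * c - y) + gpdf (LL c ρ y) * (ρ * c + y)|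
          ≤ |gpdf (UU c ρ y) * (ρ * c - y)| + |gpdf (LL c ρ y) * (ρ * c + y)| := abs_add_le _ _
        _ = gpdf (UU c ρ y) * |ρ * c - y| + gpdf (LL c ρ y) * |ρ * c + y| := by
            rw [abs_mul, abs_mul, abs_of_nonneg g1', abs_of_nonneg g2']
        _ ≤ C * (|c| + |y|) + C * (|c| + |y|) :=
            add_le_add (mul_le_mul g1 e1 (abs_nonneg _) hCpos.le)
              (mul_le_mul g2 e2 (abs_nonneg _) hCpos.le)
        _ = 2 * C * (|c| + |y|) := by ring
    have hm3 : m ^ 3 ≤ sr ρ ^ 3 := pow_le_pow_left₀ hmpos.le hmsr 3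
    rw [Real.norm_eq_abs, abs_mul, abs_of_nonneg (gpdf_nonneg y)]
    calc |DD c ρ y| * gpdf y ≤ |DD c ρ y| * C :=
          mul_le_mul_of_nonneg_left (gpdf_le y) (abs_nonneg _)
      _ ≤ (2 * C * (|c| + |y|) / m ^ 3) * C := by
          apply mul_le_mul_of_nonneg_right _ hCpos.le
          unfold DD
          rw [abs_div, abs_of_nonneg (by positivity : (0:ℝ) ≤ sr ρ ^ 3)]
          apply div_le_div₀ (by positivity) hb1 (by positivity) hm3
      _ = 2 * C * C * (|c| + |y|) / m ^ 3 := by ring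
  · exact ((continuous_const.mul
      ((continuous_const.add continuous_abs))).div_const _).intervalIntegrable _ _
  · refine Filter.Eventually.of_forall fun y _ ρ hρ => ?_
    exact (hasDerivAt_KK c y (hball ρ hρ).1).mul_const (gpdf y)

end Stmt15

namespace Stmt15

lemma deriv_integrand_nonneg (a c : ℝ) (hc : 0 ≤ c) {ρ : ℝ} (hρ0 : 0 ≤ ρ) (hρ1 : ρ < 1) :
    0 ≤ ∫ y in (-Real.sqrt a)..(Real.sqrt a), DD c ρ y * gpdf y := by
  set b := Real.sqrt a with hb
  have hbpos : 0 ≤ b := Real.sqrt_nonneg a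
  have h2 : ρ ^ 2 < 1 := by nlinarith
  have hs : 0 < sr ρ := sr_pos h2
  have hs2 : sr ρ ^ 2 = 1 - ρ ^ 2 := sr_sq h2.le
  set v : ℝ := 1 - ρ ^ 2 with hv
  have hvpos : 0 < v := by rw [hv]; nlinarith
  set A : ℝ → ℝ := fun y => gpdf (UU c ρ y) * (ρ * c - y) * gpdf y / sr ρ ^ 3 with hA
  set B : ℝ → ℝ := fun y => gpdf (LL c ρ y) * (ρ * c + y) * gpdf y / sr ρ ^ 3 with hB
  have hcontA : Continuous A := by
    apply Continuous.div_const
    exact ((continuous_gpdf.comp (continuous_UU_y c ρ)).mul (by fun_prop)).mul continuous_gpdf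
  have hcontB : Continuous B := by
    apply Continuous.div_const
    exact ((continuous_gpdf.comp (continuous_LL_y c ρ)).mul (by fun_prop)).mul continuous_gpdf
  have hsplit : ∀ y : ℝ, DD c ρ y * gpdf y = A y + B y := by
    intro y; rw [hA, hB]; unfold DD; ring
  have hAB : ∀ y : ℝ, A (-y) = B y := by
    intro y
    rw [hA, hB]
    have h1 : UU c ρ (-y) = -(LL c ρ y) := by
      unfold UU LL; rw [← neg_div]; congr 1; ring
    simp only [h1, gpdf_neg]
    ring
  have hIeq : (∫ y in (-b)..b, A y) = ∫ y in (-b)..b, B y := by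
    have h0 := intervalIntegral.integral_comp_neg (a := -b) (b := b) A
    simp only [neg_neg] at h0
    rw [← h0]
    congr 1
    funext y
    exact hAB y
  rw [intervalIntegral.integral_congr (g := fun y => A y + B y) (fun y _ => hsplit y),
    intervalIntegral.integral_add (hcontA.intervalIntegrable _ _)
      (hcontB.intervalIntegrable _ _), hIeq]
  have hBint : 0 ≤ ∫ y in (-b)..b, B y := by
    set C2 : ℝ := (Real.sqrt (2 * π))⁻¹ * (Real.sqrt (2 * π))⁻¹ * Real.exp (-c ^ 2 / 2) with hC2
    have hC2pos : 0 < C2 := by rw [hC2]; positivity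
    have hpt : ∀ y : ℝ, B y
        = C2 / sr ρ ^ 3 * ((y + ρ * c) * Real.exp (-(y + ρ * c) ^ 2 / (2 * v))) := by
      intro y
      have hLL2 : LL c ρ y ^ 2 = (c + ρ * y) ^ 2 / v := by
        unfold LL
        rw [div_pow, hs2]
        congr 1; ring
      have hE : Real.exp (-LL c ρ y ^ 2 / 2) * Real.exp (-y ^ 2 / 2)
          = Real.exp (-c ^ 2 / 2) * Real.exp (-(y + ρ * c) ^ 2 / (2 * v)) := by
        rw [← Real.exp_add, ← Real.exp_add]
        congr 1
        rw [hLL2]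
        field_simp
        ring
      have hfinal : B y = (Real.sqrt (2 * π))⁻¹ * (Real.sqrt (2 * π))⁻¹ *
          (Real.exp (-LL c ρ y ^ 2 / 2) * Real.exp (-y ^ 2 / 2)) * (ρ * c + y) / sr ρ ^ 3 := by
        rw [hB]; unfold gpdf; ring
      rw [hfinal, hE, hC2]; ring
    rw [intervalIntegral.integral_congr (fun y _ => hpt y),
      intervalIntegral.integral_const_mul]
    apply mul_nonneg (by positivity)
    have hH : ∀ y : ℝ, HasDerivAt (fun y => -v * Real.exp (-(y + ρ * c) ^ 2 / (2 * v)))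
        ((y + ρ * c) * Real.exp (-(y + ρ * c) ^ 2 / (2 * v))) y := by
      intro y
      have h1 : HasDerivAt (fun y : ℝ => -(y + ρ * c) ^ 2 / (2 * v))
          (-(2 * (y + ρ * c)) / (2 * v)) y := by
        have hd := (((hasDerivAt_id y).add_const (ρ * c)).pow 2).neg.div_const (2 * v)
        simp only [id_eq] at hd
        refine hd.congr_deriv (Eq.symm ?_)
        push_cast
        ring
      have h3 := h1.exp.const_mul (-v)
      refine h3.congr_deriv (Eq.symm ?_)
      field_simp
    rw [intervalIntegral.integral_eq_sub_of_hasDerivAt (fun y _ => hH y)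
      (Continuous.intervalIntegrable (by fun_prop) _ _)]
    have hsq : (-b + ρ * c) ^ 2 ≤ (b + ρ * c) ^ 2 := by nlinarith [mul_nonneg hρ0 hc]
    have hexple : Real.exp (-(b + ρ * c) ^ 2 / (2 * v)) ≤ Real.exp (-(-b + ρ * c) ^ 2 / (2 * v)) := by
      apply Real.exp_le_exp.2
      exact (div_le_div_iff_of_pos_right (by positivity)).mpr (by linarith)
    nlinarith [hexple, hvpos]
  linarith


lemma monotoneOn_FF (a c : ℝ) (hc : 0 ≤ c) : MonotoneOn (FF a c) (Set.Ico 0 1) := by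
  apply monotoneOn_of_deriv_nonneg (convex_Ico 0 1)
  · intro ρ hρ
    exact (hasDerivAt_FF a c hρ.1 hρ.2).continuousAt.continuousWithinAt
  · rw [interior_Ico]
    intro ρ hρ
    exact (hasDerivAt_FF a c hρ.1.le hρ.2).differentiableAt.differentiableWithinAt
  · rw [interior_Ico]
    intro ρ hρ
    rw [(hasDerivAt_FF a c hρ.1.le hρ.2).deriv]
    exact deriv_integrand_nonneg a c hc hρ.1.le hρ.2

/-- the standard gaussian measure -/
def gm : Measure ℝ := gaussianReal 0 1

instance : IsProbabilityMeasure gm := by unfold gm; infer_instance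

lemma gm_apply (s : Set ℝ) : gm s = ENNReal.ofReal (∫ x in s, gpdf x) := by
  rw [gm, gaussianReal_apply_eq_integral 0 one_ne_zero s, gpdf_eq]

lemma gm_singleton (t : ℝ) : gm {t} = 0 := by
  rw [gm_apply]
  have h0 : (volume.restrict {t} : Measure ℝ) = 0 := Measure.restrict_eq_zero.2 (by simp)
  rw [h0, integral_zero_measure, ENNReal.ofReal_zero]

/-- the standard gaussian cdf -/
def Phi (t : ℝ) : ℝ := (gm (Iic t)).toReal

lemma K_cdf {p q : ℝ} (hpq : p ≤ q) : (∫ x in p..q, gpdf x) = Phi q - Phi p := by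
  have h1 : gm (Iic p) + gm (Ioc p q) = gm (Iic q) := by
    rw [← measure_union (Set.Iic_disjoint_Ioc le_rfl) measurableSet_Ioc, Set.Iic_union_Ioc_eq_Iic hpq]
  have h2 : gm (Ioc p q) = ENNReal.ofReal (∫ x in p..q, gpdf x) := by
    rw [gm_apply, intervalIntegral.integral_of_le hpq]
  have hnonneg : 0 ≤ ∫ x in p..q, gpdf x :=
    intervalIntegral.integral_nonneg hpq fun x _ => gpdf_nonneg x
  have h3 : Phi q = Phi p + (gm (Ioc p q)).toReal := by
    rw [Phi, Phi, ← h1, ENNReal.toReal_add (measure_ne_top _ _) (measure_ne_top _ _)]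
  rw [h3, h2, ENNReal.toReal_ofReal hnonneg]
  ring

lemma tendsto_Phi_atTop : Tendsto Phi atTop (𝓝 1) := by
  have h := tendsto_measure_Iic_atTop (α := ℝ) gm
  simp only [measure_univ] at h
  have := (ENNReal.tendsto_toReal ENNReal.one_ne_top).comp h
  exact this

lemma tendsto_Phi_atBot : Tendsto Phi atBot (𝓝 0) := by
  have heq : ∀ t : ℝ, Phi t = 1 - (gm (Ici t)).toReal := by
    intro t
    have h1 : gm (Iic t) + gm (Ioi t) = 1 := by
      rw [← measure_union (Set.Iic_disjoint_Ioi le_rfl) measurableSet_Ioi,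
        Set.Iic_union_Ioi, measure_univ]
    have h2 : gm (Ioi t) = gm (Ici t) := by
      rw [← Set.Ici_sdiff_left, measure_diff_null (gm_singleton t)]
    have h3 : (gm (Iic t)).toReal + (gm (Ioi t)).toReal = 1 := by
      rw [← ENNReal.toReal_add (measure_ne_top _ _) (measure_ne_top _ _), h1, ENNReal.toReal_one]
    rw [Phi, h2] at *
    linarith
  have h := tendsto_measure_Ici_atBot (α := ℝ) gm
  simp only [measure_univ] at h
  have h4 := (ENNReal.tendsto_toReal ENNReal.one_ne_top).comp h
  have h5 : Tendsto (fun t : ℝ => 1 - (gm (Ici t)).toReal) atBot (𝓝 (1 - 1)) :=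
    tendsto_const_nhds.sub (by exact h4)
  simp only [sub_self] at h5
  exact Tendsto.congr (fun t => (heq t).symm) h5


lemma KK_nonneg {c ρ y : ℝ} (hc : 0 ≤ c) (h2 : ρ ^ 2 < 1) : 0 ≤ KK c ρ y :=
  intervalIntegral.integral_nonneg (LL_le_UU hc h2) fun x _ => gpdf_nonneg x

lemma KK_le_one {c ρ y : ℝ} (hc : 0 ≤ c) (h2 : ρ ^ 2 < 1) : KK c ρ y ≤ 1 := by
  rw [KK, intervalIntegral.integral_of_le (LL_le_UU hc h2)]
  calc (∫ x in Set.Ioc (LL c ρ y) (UU c ρ y), gpdf x) ≤ ∫ x, gpdf x :=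
        setIntegral_le_integral integrable_gpdf (Filter.Eventually.of_forall gpdf_nonneg)
  _ = 1 := integral_gpdf

lemma FF_le_limit (a c : ℝ) (hc : 0 ≤ c) {ρ' : ℝ} (h0 : 0 ≤ ρ') (h1 : ρ' < 1) :
    FF a c ρ' ≤ ∫ y in (-Real.sqrt a)..(Real.sqrt a),
      Set.indicator (Set.Icc (-c) c) gpdf y := by
  set b := Real.sqrt a with hb
  set ρs : ℕ → ℝ := fun n => 1 - ((n : ℝ) + 2)⁻¹ with hρs
  have hmem : ∀ n, ρs n ∈ Set.Ico (0:ℝ) 1 := by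
    intro n
    have h2 : (0:ℝ) < (n:ℝ) + 2 := by positivity
    have h3 : ((n:ℝ) + 2)⁻¹ ≤ 1 := by
      rw [inv_le_one_iff₀]
      right; linarith
    have h4 : 0 < ((n:ℝ) + 2)⁻¹ := by positivity
    constructor
    · simp only [hρs]; linarith
    · simp only [hρs]; linarith
  have h2n : ∀ n, (ρs n) ^ 2 < 1 := fun n => by nlinarith [(hmem n).1, (hmem n).2]
  have htend : Tendsto ρs atTop (𝓝 1) := by
    have h5 : Tendsto (fun n : ℕ => ((n:ℝ) + 2)⁻¹) atTop (𝓝 0) := by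
      apply tendsto_inv_atTop_zero.comp
      exact tendsto_atTop_add_const_right _ 2 tendsto_natCast_atTop_atTop
    have h6 := (tendsto_const_nhds (x := (1:ℝ))).sub h5
    simp only [sub_zero] at h6
    exact h6
  have hev : ∀ᶠ n in atTop, FF a c ρ' ≤ FF a c (ρs n) := by
    have h6 : ∀ᶠ n in atTop, ρ' < ρs n := htend.eventually (eventually_gt_nhds h1)
    filter_upwards [h6] with n hn
    exact monotoneOn_FF a c hc ⟨h0, h1⟩ (hmem n) hn.le
  have hsr0 : Tendsto (fun n => sr (ρs n)) atTop (𝓝 0) := by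
    have h7 : Tendsto (fun n => 1 - (ρs n) ^ 2) atTop (𝓝 0) := by
      have h8 : Tendsto (fun n => (ρs n) ^ 2) atTop (𝓝 1) := by
        have := htend.mul htend
        simp only [one_mul] at this
        exact this.congr fun n => (sq (ρs n)).symm
      have h9 := (tendsto_const_nhds (x := (1:ℝ))).sub h8
      simp only [sub_self] at h9
      exact h9
    have := h7.sqrt
    simpa [sr, Real.sqrt_zero] using this
  have hinv : Tendsto (fun n => (sr (ρs n))⁻¹) atTop atTop := by
    apply Filter.Tendsto.inv_tendsto_nhdsGT_zero
    apply tendsto_nhdsWithin_of_tendsto_nhds_of_eventually_within _ hsr0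
    exact Filter.Eventually.of_forall fun n => sr_pos (h2n n)
  have hnum : ∀ d y : ℝ, Tendsto (fun n => d - ρs n * y) atTop (𝓝 (d - y)) := by
    intro d y
    have h9 := (tendsto_const_nhds (x := d)).sub (htend.mul_const y)
    simp only [one_mul] at h9
    exact h9
  have hT : Tendsto (fun n => FF a c (ρs n)) atTop
      (𝓝 (∫ y in (-b)..b, Set.indicator (Set.Icc (-c) c) gpdf y)) := by
    unfold FF
    apply intervalIntegral.tendsto_integral_filter_of_dominated_convergence gpdf
    · exact Filter.Eventually.of_forall fun n =>
        ((continuous_KK_y c (ρs n)).mul continuous_gpdf).aestronglyMeasurable.restrict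
    · refine Filter.Eventually.of_forall fun n => (ae_of_all _ fun y _ => ?_)
      rw [Real.norm_eq_abs, abs_mul, abs_of_nonneg (gpdf_nonneg y),
        abs_of_nonneg (KK_nonneg hc (h2n n))]
      nth_rewrite 2 [← one_mul (gpdf y)]
      exact mul_le_mul_of_nonneg_right (KK_le_one hc (h2n n)) (gpdf_nonneg y)
    · exact intervalIntegrable_gpdf
    · have hae : ∀ᵐ y ∂(volume : Measure ℝ), y ≠ c ∧ y ≠ -c := by
        have hnull : (volume : Measure ℝ) ({c, -c} : Set ℝ) = 0 :=
          ((Set.finite_singleton (-c)).insert c).measure_zero _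
        rw [ae_iff]
        apply measure_mono_null _ hnull
        intro y hy
        simp only [Set.mem_setOf_eq, not_and_or, not_not] at hy
        simpa using hy
      filter_upwards [hae] with y hy _
      have hKcdf : ∀ n, KK c (ρs n) y = Phi (UU c (ρs n) y) - Phi (LL c (ρs n) y) :=
        fun n => K_cdf (LL_le_UU hc (h2n n))
      rcases lt_trichotomy |y| c with hlt | heq | hgt
      · -- |y| < c : K → 1
        obtain ⟨hy1, hy2⟩ := abs_lt.1 hlt
        have hyIcc : y ∈ Set.Icc (-c) c := ⟨hy1.le, hy2.le⟩
        rw [Set.indicator_of_mem hyIcc]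
        have hU : Tendsto (fun n => UU c (ρs n) y) atTop atTop := by
          simp only [UU, div_eq_mul_inv]
          exact Filter.Tendsto.pos_mul_atTop (by linarith : 0 < c - y) (hnum c y) hinv
        have hL : Tendsto (fun n => LL c (ρs n) y) atTop atBot := by
          simp only [LL, div_eq_mul_inv]
          exact Filter.Tendsto.neg_mul_atTop (by linarith : -c - y < 0) (hnum (-c) y) hinv
        have hK1 : Tendsto (fun n => KK c (ρs n) y) atTop (𝓝 1) := by
          simp only [hKcdf]
          have := (tendsto_Phi_atTop.comp hU).sub (tendsto_Phi_atBot.comp hL)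
          simpa [Function.comp] using this
        simpa using hK1.mul_const (gpdf y)
      · exfalso
        rcases abs_choice y with h | h
        · exact hy.1 (h ▸ heq)
        · exact hy.2 (by rw [h] at heq; linarith)
      · have hyIcc : y ∉ Set.Icc (-c) c := fun hm => (not_le.2 hgt) (abs_le.2 hm)
        rw [Set.indicator_of_notMem hyIcc]
        have hK0 : Tendsto (fun n => KK c (ρs n) y) atTop (𝓝 0) := by
          rcases le_or_gt 0 y with hy0 | hy0
          · have hyc : c < y := by rwa [abs_of_nonneg hy0] at hgt
            have hU : Tendsto (fun n => UU c (ρs n) y) atTop atBot := by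
              simp only [UU, div_eq_mul_inv]
              exact Filter.Tendsto.neg_mul_atTop (by linarith : c - y < 0) (hnum c y) hinv
            have hL : Tendsto (fun n => LL c (ρs n) y) atTop atBot := by
              simp only [LL, div_eq_mul_inv]
              exact Filter.Tendsto.neg_mul_atTop (by linarith : -c - y < 0) (hnum (-c) y) hinv
            simp only [hKcdf]
            have := (tendsto_Phi_atBot.comp hU).sub (tendsto_Phi_atBot.comp hL)
            simpa [Function.comp] using this
          · have hyc : y < -c := by rw [abs_of_neg hy0] at hgt; linarith
            have hU : Tendsto (fun n => UU c (ρs n) y) atTop atTop := by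
              simp only [UU, div_eq_mul_inv]
              exact Filter.Tendsto.pos_mul_atTop (by linarith : 0 < c - y) (hnum c y) hinv
            have hL : Tendsto (fun n => LL c (ρs n) y) atTop atTop := by
              simp only [LL, div_eq_mul_inv]
              exact Filter.Tendsto.pos_mul_atTop (by linarith : 0 < -c - y) (hnum (-c) y) hinv
            simp only [hKcdf]
            have := (tendsto_Phi_atTop.comp hU).sub (tendsto_Phi_atTop.comp hL)
            simpa [Function.comp] using this
        simpa using hK0.mul_const (gpdf y)
  exact ge_of_tendsto hT hev


lemma sq_le_iff_mem_Icc {y a : ℝ} (ha : 0 ≤ a) :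
    y ^ 2 ≤ a ↔ y ∈ Set.Icc (-Real.sqrt a) (Real.sqrt a) := by
  constructor
  · intro h
    have h1 : |y| ≤ Real.sqrt a := by
      rw [← Real.sqrt_sq_eq_abs]
      exact Real.sqrt_le_sqrt h
    obtain ⟨h2, h3⟩ := abs_le.1 h1
    exact ⟨h2, h3⟩
  · rintro ⟨h2, h3⟩
    have h4 : |y| ≤ Real.sqrt a := abs_le.2 ⟨h2, h3⟩
    have h5 : y ^ 2 ≤ Real.sqrt a ^ 2 := by
      rw [← sq_abs]
      exact pow_le_pow_left₀ (abs_nonneg y) h4 2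
    calc y ^ 2 ≤ Real.sqrt a ^ 2 := h5
    _ = a := Real.sq_sqrt ha

lemma FF_eq_setIntegral (a c ρ : ℝ) :
    FF a c ρ = ∫ y in Set.Icc (-Real.sqrt a) (Real.sqrt a), KK c ρ y * gpdf y := by
  rw [FF, intervalIntegral.integral_of_le (neg_nonpos_of_nonneg (Real.sqrt_nonneg a) |>.trans
    (Real.sqrt_nonneg a)), integral_Icc_eq_integral_Ioc]

lemma measure_prod_eq (a c ρ : ℝ) (ha : 0 ≤ a) (hc : 0 ≤ c) (h0 : 0 ≤ ρ) (h1 : ρ < 1) :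
    (gm.prod gm) ({q : ℝ × ℝ | q.2 ^ 2 ≤ a} ∩ {q : ℝ × ℝ | |sr ρ * q.1 + ρ * q.2| ≤ c})
      = ENNReal.ofReal (FF a c ρ) := by
  have h2 : ρ ^ 2 < 1 := by nlinarith
  have hs : 0 < sr ρ := sr_pos h2
  set b := Real.sqrt a with hb
  have hmeas : MeasurableSet
      ({q : ℝ × ℝ | q.2 ^ 2 ≤ a} ∩ {q : ℝ × ℝ | |sr ρ * q.1 + ρ * q.2| ≤ c}) := by
    apply MeasurableSet.inter
    · exact measurableSet_le (by fun_prop) measurable_const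
    · exact measurableSet_le (by fun_prop) measurable_const
  rw [Measure.prod_apply_symm hmeas]
  have key : ∀ y : ℝ, gm ((fun x => (x, y)) ⁻¹'
        ({q : ℝ × ℝ | q.2 ^ 2 ≤ a} ∩ {q : ℝ × ℝ | |sr ρ * q.1 + ρ * q.2| ≤ c}))
      = Set.indicator (Set.Icc (-b) b) (fun y => ENNReal.ofReal (KK c ρ y)) y := by
    intro y
    by_cases hya : y ∈ Set.Icc (-b) b
    · rw [Set.indicator_of_mem hya]
      have hpre : (fun x => (x, y)) ⁻¹'
            ({q : ℝ × ℝ | q.2 ^ 2 ≤ a} ∩ {q : ℝ × ℝ | |sr ρ * q.1 + ρ * q.2| ≤ c})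
          = Set.Icc (LL c ρ y) (UU c ρ y) := by
        ext x
        simp only [Set.mem_preimage, Set.mem_inter_iff, Set.mem_setOf_eq, Set.mem_Icc]
        rw [and_iff_right ((sq_le_iff_mem_Icc ha).2 hya), abs_le, LL, UU, div_le_iff₀ hs, le_div_iff₀ hs]
        constructor <;> intro h <;> constructor <;> nlinarith [h.1, h.2]
      rw [hpre, gm_apply, integral_Icc_eq_integral_Ioc,
        ← intervalIntegral.integral_of_le (LL_le_UU hc h2)]
      rfl
    · rw [Set.indicator_of_notMem hya]
      have hpre : (fun x => (x, y)) ⁻¹'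
            ({q : ℝ × ℝ | q.2 ^ 2 ≤ a} ∩ {q : ℝ × ℝ | |sr ρ * q.1 + ρ * q.2| ≤ c})
          = ∅ := by
        ext x
        simp only [Set.mem_preimage, Set.mem_inter_iff, Set.mem_setOf_eq, Set.mem_empty_iff_false,
          iff_false, not_and]
        intro hya2
        exact absurd ((sq_le_iff_mem_Icc ha).1 hya2) hya
      rw [hpre, measure_empty]
  rw [lintegral_congr key, lintegral_indicator measurableSet_Icc _]
  have hgm : gm = volume.withDensity (gaussianPDF 0 1) := gaussianReal_of_var_ne_zero 0 one_ne_zero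
  have hKmeas : Measurable fun y => ENNReal.ofReal (KK c ρ y) :=
    (continuous_KK_y c ρ).measurable.ennreal_ofReal
  rw [hgm, restrict_withDensity measurableSet_Icc,
    lintegral_withDensity_eq_lintegral_mul _ (measurable_gaussianPDF 0 1) hKmeas]
  have hptwise : ∀ y : ℝ, (gaussianPDF 0 1 * fun y => ENNReal.ofReal (KK c ρ y)) y
      = ENNReal.ofReal (KK c ρ y * gpdf y) := by
    intro y
    simp only [Pi.mul_apply, gaussianPDF, gpdf_eq]
    rw [← ENNReal.ofReal_mul (gpdf_nonneg y), mul_comm]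
  rw [lintegral_congr hptwise, ← ofReal_integral_eq_lintegral_ofReal]
  · rw [FF_eq_setIntegral]
  · exact ((continuous_KK_y c ρ).mul continuous_gpdf).integrableOn_Icc
  · exact ae_of_all _ fun y => mul_nonneg (KK_nonneg hc h2) (gpdf_nonneg y)

lemma measure_prod_eq_one (a c : ℝ) (ha : 0 ≤ a) :
    (gm.prod gm) ({q : ℝ × ℝ | q.2 ^ 2 ≤ a} ∩ {q : ℝ × ℝ | |q.2| ≤ c})
      = ENNReal.ofReal (∫ y in (-Real.sqrt a)..(Real.sqrt a),
          Set.indicator (Set.Icc (-c) c) gpdf y) := by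
  set b := Real.sqrt a with hb
  have hset : ({q : ℝ × ℝ | q.2 ^ 2 ≤ a} ∩ {q : ℝ × ℝ | |q.2| ≤ c})
      = (Set.univ : Set ℝ) ×ˢ (Set.Icc (-b) b ∩ Set.Icc (-c) c) := by
    ext q
    simp only [Set.mem_inter_iff, Set.mem_setOf_eq, Set.mem_prod, Set.mem_univ, true_and]
    rw [sq_le_iff_mem_Icc ha, abs_le]
    rfl
  rw [hset, Measure.prod_prod, measure_univ, one_mul, gm_apply]
  rw [intervalIntegral.integral_of_le (by
    have := Real.sqrt_nonneg a; rw [← hb] at this; linarith), ← integral_Icc_eq_integral_Ioc]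
  congr 1
  have h9 : (∫ y in Set.Icc (-b) b, (Set.Icc (-c) c).indicator gpdf y)
      = ∫ x in Set.Icc (-b) b ∩ Set.Icc (-c) c, gpdf x := by
    rw [MeasureTheory.integral_indicator measurableSet_Icc,
      Measure.restrict_restrict measurableSet_Icc, Set.inter_comm]
  exact h9.symm

end Stmt15

end

open Stmt15 in
/-- For independent `ε₀, η ~ N(0,1)`, `a ≥ 0`, `c ≥ 0` and `1 ≥ ρ ≥ ρ̃ ≥ 0`,
`P(|√(1−ρ²) ε₀ + ρ η| ≤ c | η² ≤ a) ≥ P(|√(1−ρ̃²) ε₀ + ρ̃ η| ≤ c | η² ≤ a)`. -/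
theorem stmt15 (a c ρ ρ' : ℝ) (ha : 0 ≤ a) (hc : 0 ≤ c)
    (h1 : ρ ≤ 1) (h2 : ρ' ≤ ρ) (h3 : 0 ≤ ρ') :
    letI μ := (gaussianReal 0 1).prod (gaussianReal 0 1)
    (μ[|{q : ℝ × ℝ | q.2 ^ 2 ≤ a}])
        {q : ℝ × ℝ | |Real.sqrt (1 - ρ' ^ 2) * q.1 + ρ' * q.2| ≤ c}
      ≤ (μ[|{q : ℝ × ℝ | q.2 ^ 2 ≤ a}])
          {q : ℝ × ℝ | |Real.sqrt (1 - ρ ^ 2) * q.1 + ρ * q.2| ≤ c} := by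
  have hE : MeasurableSet {q : ℝ × ℝ | q.2 ^ 2 ≤ a} :=
    measurableSet_le (by fun_prop) measurable_const
  rw [ProbabilityTheory.cond_apply hE, ProbabilityTheory.cond_apply hE]
  apply mul_le_mul_right
  have hρ0 : 0 ≤ ρ := le_trans h3 h2
  by_cases hρ1 : ρ < 1
  · have hρ'1 : ρ' < 1 := lt_of_le_of_lt h2 hρ1
    show (gm.prod gm) ({q : ℝ × ℝ | q.2 ^ 2 ≤ a} ∩ {q : ℝ × ℝ | |sr ρ' * q.1 + ρ' * q.2| ≤ c})
      ≤ (gm.prod gm) ({q : ℝ × ℝ | q.2 ^ 2 ≤ a} ∩ {q : ℝ × ℝ | |sr ρ * q.1 + ρ * q.2| ≤ c})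
    rw [measure_prod_eq a c ρ' ha hc h3 hρ'1, measure_prod_eq a c ρ ha hc hρ0 hρ1]
    exact ENNReal.ofReal_le_ofReal (monotoneOn_FF a c hc ⟨h3, hρ'1⟩ ⟨hρ0, hρ1⟩ h2)
  · have hρeq : ρ = 1 := le_antisymm h1 (not_lt.1 hρ1)
    subst hρeq
    have hset : {q : ℝ × ℝ | |Real.sqrt (1 - 1 ^ 2) * q.1 + 1 * q.2| ≤ c}
        = {q : ℝ × ℝ | |q.2| ≤ c} := by
      ext q
      simp
    rw [hset]
    by_cases hρ'1 : ρ' < 1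
    · show (gm.prod gm) ({q : ℝ × ℝ | q.2 ^ 2 ≤ a} ∩ {q : ℝ × ℝ | |sr ρ' * q.1 + ρ' * q.2| ≤ c})
        ≤ (gm.prod gm) ({q : ℝ × ℝ | q.2 ^ 2 ≤ a} ∩ {q : ℝ × ℝ | |q.2| ≤ c})
      rw [measure_prod_eq a c ρ' ha hc h3 hρ'1, measure_prod_eq_one a c ha]
      exact ENNReal.ofReal_le_ofReal (FF_le_limit a c hc h3 hρ'1)
    · have hρ'eq : ρ' = 1 := le_antisymm h2 (not_lt.1 hρ'1)
      subst hρ'eq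
      rw [hset]
end

section
/- Let ε ~ N(0, I_m), let Δ = diag(ρ₁,...,ρ_m) and Δ̃ = diag(ρ̃₁,...,ρ̃_m) be diagonal matrices with entries in [0,1] satisfying ρ_j ≥ ρ̃_j for all j, and let η ~ N(0, I_m) be independent of ε. Then for every r ≥ 0 and a > 0, P((I_m − Δ²)^{1/2} ε + Δη ∈ B_m(r) | η'η ≤ a) ≥ P((I_m − Δ̃²)^{1/2} ε + Δ̃η ∈ B_m(r) | η'η ≤ a), where B_m(r) is the centered Euclidean ball of radius r in ℝ^m. -/
open MeasureTheory ProbabilityTheory BigOperators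

set_option maxHeartbeats 1000000

namespace Stmt16Aux

open Real

noncomputable def gam : Measure ℝ := gaussianReal 0 1

instance : IsProbabilityMeasure gam := by unfold gam; infer_instance

noncomputable def phi (t : ℝ) : ℝ := (Real.sqrt (2 * Real.pi))⁻¹ * Real.exp (-t ^ 2 / 2)

lemma phi_eq : gaussianPDFReal 0 1 = phi := by
  funext x
  simp [gaussianPDFReal, phi]

lemma phi_nonneg (t : ℝ) : 0 ≤ phi t := by
  unfold phi; positivity

lemma phi_continuous : Continuous phi := by
  unfold phi; fun_prop

lemma phi_neg (t : ℝ) : phi (-t) = phi t := by simp [phi]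

/-- CDF-like function -/
noncomputable def Psi (y : ℝ) : ℝ := ∫ t in (0:ℝ)..y, phi t

lemma hasDerivAt_Psi (y : ℝ) : HasDerivAt Psi (phi y) y := by
  refine intervalIntegral.integral_hasDerivAt_right
    (phi_continuous.intervalIntegrable _ _)
    phi_continuous.stronglyMeasurable.stronglyMeasurableAtFilter
    phi_continuous.continuousAt

lemma Psi_sub (l y : ℝ) : Psi y - Psi l = ∫ t in l..y, phi t := by
  rw [Psi, Psi, intervalIntegral.integral_interval_sub_left
    (phi_continuous.intervalIntegrable _ _) (phi_continuous.intervalIntegrable _ _)]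

lemma Psi_mono {l y : ℝ} (h : l ≤ y) : Psi l ≤ Psi y := by
  have := Psi_sub l y
  have h2 : 0 ≤ ∫ t in l..y, phi t :=
    intervalIntegral.integral_nonneg h (fun x _ => phi_nonneg x)
  linarith

lemma Psi_continuous : Continuous Psi :=
  intervalIntegral.continuous_primitive (fun a b => phi_continuous.intervalIntegrable a b) 0

noncomputable def sx (x : ℝ) : ℝ := Real.sqrt (1 - x ^ 2)

/-- the 1-D event -/
def E (u C x : ℝ) : Set (ℝ × ℝ) :=
  {p : ℝ × ℝ | p.2 ^ 2 ≤ u ^ 2 ∧ (sx x * p.1 + x * p.2) ^ 2 ≤ C ^ 2}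

noncomputable def g (C x t : ℝ) : ℝ := Psi ((C - x * t) / sx x) - Psi ((-C - x * t) / sx x)

lemma sx_pos {x : ℝ} (hx : x ^ 2 < 1) : 0 < sx x := Real.sqrt_pos.2 (by linarith)

lemma sx_sq {x : ℝ} (hx : x ^ 2 ≤ 1) : sx x ^ 2 = 1 - x ^ 2 := Real.sq_sqrt (by linarith)

lemma endpoints_le {C x t : ℝ} (hC : 0 ≤ C) (hs : 0 ≤ sx x) :
    (-C - x * t) / sx x ≤ (C - x * t) / sx x := by
  rcases eq_or_lt_of_le hs with h0 | h0
  · rw [← h0]; simp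
  · gcongr; linarith

lemma g_nonneg (C x t : ℝ) (hC : 0 ≤ C) (hs : 0 ≤ sx x) : 0 ≤ g C x t := by
  have := Psi_mono (endpoints_le (t := t) hC hs)
  simp only [g]; linarith


/-- The slice identity. -/
lemma slice_eq (C x t : ℝ) (hC : 0 ≤ C) (hx : x ^ 2 < 1) :
    gam {e : ℝ | (sx x * e + x * t) ^ 2 ≤ C ^ 2} = ENNReal.ofReal (g C x t) := by
  have hs := sx_pos hx
  have hset : {e : ℝ | (sx x * e + x * t) ^ 2 ≤ C ^ 2}
      = Set.Icc ((-C - x * t) / sx x) ((C - x * t) / sx x) := by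
    ext e
    simp only [Set.mem_setOf_eq, Set.mem_Icc, div_le_iff₀ hs, le_div_iff₀ hs]
    constructor
    · intro h
      constructor <;> nlinarith [sq_nonneg (sx x * e + x * t + C), sq_nonneg (sx x * e + x * t - C)]
    · intro ⟨h1, h2⟩; nlinarith
  rw [hset, gam, gaussianReal_apply_eq_integral 0 one_ne_zero, phi_eq]
  congr 1
  rw [MeasureTheory.integral_Icc_eq_integral_Ioc,
    ← intervalIntegral.integral_of_le (endpoints_le hC hs.le)]
  exact (Psi_sub _ _).symm

lemma measurableSet_E (u C x : ℝ) : MeasurableSet (E u C x) := by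
  unfold E
  rw [Set.setOf_and]
  exact (measurableSet_le (by fun_prop) measurable_const).inter
    (measurableSet_le (by fun_prop) measurable_const)

lemma g_cont_t (C x : ℝ) : Continuous (fun t => g C x t) := by
  unfold g
  exact (Psi_continuous.comp ((continuous_const.sub (continuous_const.mul continuous_id)).div_const _)).sub
    (Psi_continuous.comp ((continuous_const.sub (continuous_const.mul continuous_id)).div_const _))

lemma K_repr (u C x : ℝ) (hu : 0 ≤ u) (hC : 0 ≤ C) (hx : x ^ 2 < 1) :
    (gam.prod gam) (E u C x) = ENNReal.ofReal (∫ t in (-u)..u, phi t * g C x t) := by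
  rw [Measure.prod_apply_symm (measurableSet_E u C x)]
  have hslice : ∀ t, gam ((fun e => (e, t)) ⁻¹' E u C x)
      = Set.indicator (Set.Icc (-u) u) (fun t => ENNReal.ofReal (g C x t)) t := by
    intro t
    by_cases ht : t ∈ Set.Icc (-u) u
    · have ht2 : t ^ 2 ≤ u ^ 2 := by
        obtain ⟨h1, h2⟩ := ht; nlinarith
      rw [Set.indicator_of_mem ht]
      have hpre : (fun e => (e, t)) ⁻¹' E u C x = {e | (sx x * e + x * t) ^ 2 ≤ C ^ 2} := by
        ext e; simp [E, ht2]
      rw [hpre, slice_eq C x t hC hx]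
    · rw [Set.indicator_of_notMem ht]
      have ht2 : ¬ (t ^ 2 ≤ u ^ 2) := by
        simp only [Set.mem_Icc, not_and_or, not_le] at ht
        rcases ht with h | h <;> nlinarith
      have hpre : (fun e => (e, t)) ⁻¹' E u C x = ∅ := by
        ext e; simp [E]; intro h; exact absurd h ht2
      rw [hpre]; simp
  rw [lintegral_congr hslice, lintegral_indicator measurableSet_Icc _]
  have hg : Measurable (fun a : ℝ => ENNReal.ofReal (g C x a)) :=
    ENNReal.measurable_ofReal.comp (g_cont_t C x).measurable
  rw [gam, gaussianReal_of_var_ne_zero 0 one_ne_zero, restrict_withDensity measurableSet_Icc,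
    lintegral_withDensity_eq_lintegral_mul _ (measurable_gaussianPDF 0 1) hg]
  have heq : ∀ t, gaussianPDF 0 1 t * ENNReal.ofReal (g C x t)
      = ENNReal.ofReal (phi t * g C x t) := by
    intro t
    rw [gaussianPDF, phi_eq, ← ENNReal.ofReal_mul (phi_nonneg t)]
  simp only [Pi.mul_apply, heq]
  rw [← ofReal_integral_eq_lintegral_ofReal
    ((phi_continuous.mul (g_cont_t C x)).integrableOn_Icc (f := fun t => phi t * g C x t))
    (Filter.Eventually.of_forall fun t => mul_nonneg (phi_nonneg t) (g_nonneg C x t hC (Real.sqrt_nonneg _)))]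
  congr 1
  rw [MeasureTheory.integral_Icc_eq_integral_Ioc,
    ← intervalIntegral.integral_of_le (by linarith : -u ≤ u)]

/-- derivative in `x` of `g` -/
noncomputable def D (C x t : ℝ) : ℝ :=
  (phi ((C - x * t) / sx x) * (x * C - t) + phi ((C + x * t) / sx x) * (x * C + t)) / sx x ^ 3

lemma hasDerivAt_sx {x : ℝ} (hx : x ^ 2 < 1) : HasDerivAt sx (-x / sx x) x := by
  have hs := sx_pos hx
  have h1 : HasDerivAt (fun x : ℝ => 1 - x ^ 2) (-(2 * x)) x := by
    simpa using ((hasDerivAt_pow 2 x).const_sub 1)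
  have h2 := (Real.hasDerivAt_sqrt (by nlinarith : (1:ℝ) - x ^ 2 ≠ 0)).comp x h1
  refine h2.congr_deriv (Eq.symm ?_)
  unfold sx
  rw [show Real.sqrt (1 - x ^ 2) = sx x from rfl]
  field_simp

lemma hasDerivAt_ratio (K t : ℝ) {x : ℝ} (hx : x ^ 2 < 1) :
    HasDerivAt (fun x => (K - x * t) / sx x) ((x * K - t) / sx x ^ 3) x := by
  have hs := sx_pos hx
  have hs2 := sx_sq hx.le
  have hnum : HasDerivAt (fun x : ℝ => K - x * t) (-t) x := by
    simpa using ((hasDerivAt_id x).mul_const t).const_sub K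
  have h := hnum.div (hasDerivAt_sx hx) (ne_of_gt hs)
  refine h.congr_deriv (Eq.symm ?_)
  have key : -t * sx x - (K - x * t) * (-x / sx x) = (x * K - t) / sx x := by
    field_simp
    linear_combination (-t) * hs2
  rw [key, div_div, ← pow_succ']


lemma hasDerivAt_g (C t : ℝ) {x : ℝ} (hx : x ^ 2 < 1) :
    HasDerivAt (fun x => g C x t) (D C x t) x := by
  have h1 := (hasDerivAt_Psi ((C - x * t) / sx x)).comp x (hasDerivAt_ratio C t hx)
  have h2 := (hasDerivAt_Psi ((-C - x * t) / sx x)).comp x (hasDerivAt_ratio (-C) t hx)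
  have h := h1.sub h2
  refine h.congr_deriv (Eq.symm ?_)
  unfold D
  rw [show (-C - x * t) / sx x = -((C + x * t) / sx x) by ring, phi_neg]
  ring

lemma sx_continuous : Continuous sx := by
  unfold sx; fun_prop

lemma sx_pos_of_mem {τ σ x : ℝ} (h0 : 0 ≤ τ) (h1 : σ < 1) (hx : x ∈ Set.Icc τ σ) :
    x ^ 2 < 1 := by
  obtain ⟨ha, hb⟩ := hx; nlinarith

lemma D_contOn (C τ σ : ℝ) (h0 : 0 ≤ τ) (h1 : σ < 1) :
    ContinuousOn (fun z : ℝ × ℝ => D C z.1 z.2) (Set.Icc τ σ ×ˢ (Set.univ : Set ℝ)) := by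
  have hne : ∀ z : ℝ × ℝ, z ∈ Set.Icc τ σ ×ˢ (Set.univ : Set ℝ) → sx z.1 ≠ 0 := by
    intro z hz
    exact ne_of_gt (sx_pos (sx_pos_of_mem h0 h1 hz.1))
  have hsxz : ContinuousOn (fun z : ℝ × ℝ => sx z.1) (Set.Icc τ σ ×ˢ (Set.univ : Set ℝ)) :=
    (sx_continuous.comp continuous_fst).continuousOn
  have harg1 : ContinuousOn (fun z : ℝ × ℝ => (C - z.1 * z.2) / sx z.1)
      (Set.Icc τ σ ×ˢ (Set.univ : Set ℝ)) :=
    ContinuousOn.div (by fun_prop) hsxz hne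
  have harg2 : ContinuousOn (fun z : ℝ × ℝ => (C + z.1 * z.2) / sx z.1)
      (Set.Icc τ σ ×ˢ (Set.univ : Set ℝ)) :=
    ContinuousOn.div (by fun_prop) hsxz hne
  unfold D
  exact ContinuousOn.div
    (((phi_continuous.comp_continuousOn harg1).mul (by fun_prop)).add
      ((phi_continuous.comp_continuousOn harg2).mul (by fun_prop)))
    (hsxz.pow 3) (fun z hz => pow_ne_zero 3 (hne z hz))

lemma D_contOn_x (C t τ σ : ℝ) (h0 : 0 ≤ τ) (h1 : σ < 1) :
    ContinuousOn (fun x => D C x t) (Set.Icc τ σ) := by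
  have h := (D_contOn C τ σ h0 h1).comp
    (Continuous.continuousOn (f := fun x : ℝ => (x, t)) (by fun_prop))
    (fun x hx => Set.mk_mem_prod hx (Set.mem_univ t))
  exact h

lemma g_sub (C t : ℝ) {τ σ : ℝ} (h0 : 0 ≤ τ) (hts : τ ≤ σ) (h1 : σ < 1) :
    g C σ t - g C τ t = ∫ x in τ..σ, D C x t := by
  have huIcc : Set.uIcc τ σ = Set.Icc τ σ := Set.uIcc_of_le hts
  refine (intervalIntegral.integral_eq_sub_of_hasDerivAt (f := fun y => g C y t)
    (f' := fun y => D C y t) (fun x hx => ?_) ?_).symm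
  · rw [huIcc] at hx
    exact hasDerivAt_g C t (sx_pos_of_mem h0 h1 hx)
  · apply ContinuousOn.intervalIntegrable
    rw [huIcc]
    exact D_contOn_x C t τ σ h0 h1

lemma D_cont_t (C x : ℝ) (hx : x ^ 2 < 1) : Continuous (fun t => D C x t) := by
  have hs := sx_pos hx
  unfold D
  apply Continuous.div_const
  exact ((phi_continuous.comp (by fun_prop)).mul (by fun_prop)).add
    ((phi_continuous.comp (by fun_prop)).mul (by fun_prop))

lemma prod_id (C x t : ℝ) (hx : x ^ 2 < 1) :
    phi t * phi ((C - x * t) / sx x)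
      = (2 * Real.pi)⁻¹ * (Real.exp (-C ^ 2 / 2)
          * Real.exp (-(t - C * x) ^ 2 / (2 * (1 - x ^ 2)))) := by
  have hs2 := sx_sq hx.le
  have hv : (0:ℝ) < 1 - x ^ 2 := by nlinarith
  have h2π : Real.sqrt (2 * Real.pi) * Real.sqrt (2 * Real.pi) = 2 * Real.pi :=
    Real.mul_self_sqrt (by positivity)
  unfold phi
  rw [div_pow, hs2, mul_mul_mul_comm, ← Real.exp_add, ← Real.exp_add]
  congr 1
  · nth_rewrite 3 [← h2π]
    rw [mul_inv]
  · rw [Real.exp_eq_exp]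
    field_simp
    ring

lemma prod_id' (C x t : ℝ) (hx : x ^ 2 < 1) :
    phi t * phi ((C + x * t) / sx x)
      = (2 * Real.pi)⁻¹ * (Real.exp (-C ^ 2 / 2)
          * Real.exp (-(t + C * x) ^ 2 / (2 * (1 - x ^ 2)))) := by
  have h := prod_id C x (-t) hx
  rw [show C - x * -t = C + x * t by ring, show (-t - C * x) ^ 2 = (t + C * x) ^ 2 by ring,
    phi_neg] at h
  exact h

lemma inner_nonneg (C u : ℝ) (hC : 0 ≤ C) (hu : 0 ≤ u) {x : ℝ} (hx0 : 0 ≤ x)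
    (hx : x ^ 2 < 1) : 0 ≤ ∫ t in (-u)..u, D C x t * phi t := by
  have hs := sx_pos hx
  have hs2 := sx_sq hx.le
  have hv : (0:ℝ) < 1 - x ^ 2 := by nlinarith
  have hH : ∀ t, HasDerivAt
      (fun t => (2 * Real.pi)⁻¹ * Real.exp (-C ^ 2 / 2) * (sx x)⁻¹
        * (Real.exp (-(t - C * x) ^ 2 / (2 * (1 - x ^ 2)))
          - Real.exp (-(t + C * x) ^ 2 / (2 * (1 - x ^ 2)))))
      (D C x t * phi t) t := by
    intro t
    have e1 : HasDerivAt (fun t => Real.exp (-(t - C * x) ^ 2 / (2 * (1 - x ^ 2))))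
        (Real.exp (-(t - C * x) ^ 2 / (2 * (1 - x ^ 2))) * (-(t - C * x) / (1 - x ^ 2))) t := by
      have hin : HasDerivAt (fun t : ℝ => -(t - C * x) ^ 2 / (2 * (1 - x ^ 2)))
          (-(t - C * x) / (1 - x ^ 2)) t := by
        have h1 : HasDerivAt (fun t : ℝ => t - C * x) 1 t := (hasDerivAt_id t).sub_const _
        have h2 := (h1.pow 2).neg.div_const (2 * (1 - x ^ 2))
        refine h2.congr_deriv (Eq.symm ?_)
        field_simp
        ring
      exact hin.exp
    have e2 : HasDerivAt (fun t => Real.exp (-(t + C * x) ^ 2 / (2 * (1 - x ^ 2))))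
        (Real.exp (-(t + C * x) ^ 2 / (2 * (1 - x ^ 2))) * (-(t + C * x) / (1 - x ^ 2))) t := by
      have hin : HasDerivAt (fun t : ℝ => -(t + C * x) ^ 2 / (2 * (1 - x ^ 2)))
          (-(t + C * x) / (1 - x ^ 2)) t := by
        have h1 : HasDerivAt (fun t : ℝ => t + C * x) 1 t := (hasDerivAt_id t).add_const _
        have h2 := (h1.pow 2).neg.div_const (2 * (1 - x ^ 2))
        refine h2.congr_deriv (Eq.symm ?_)
        field_simp
        ring
      exact hin.exp
    have h := (e1.sub e2).const_mul ((2 * Real.pi)⁻¹ * Real.exp (-C ^ 2 / 2) * (sx x)⁻¹)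
    refine h.congr_deriv (Eq.symm ?_)
    have expand : D C x t * phi t
        = (phi t * phi ((C - x * t) / sx x)) * ((x * C - t) / sx x ^ 3)
          + (phi t * phi ((C + x * t) / sx x)) * ((x * C + t) / sx x ^ 3) := by
      unfold D; ring
    rw [expand, prod_id C x t hx, prod_id' C x t hx]
    have h3 : sx x ^ 3 = (1 - x ^ 2) * sx x := by rw [pow_succ, hs2]
    rw [h3]
    field_simp
    ring
  rw [intervalIntegral.integral_eq_sub_of_hasDerivAt (fun t _ => hH t)
    (((D_cont_t C x hx).mul phi_continuous).intervalIntegrable _ _)]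
  have hKc0 : (0:ℝ) ≤ (2 * Real.pi)⁻¹ * Real.exp (-C ^ 2 / 2) * (sx x)⁻¹ := by positivity
  have h2v : (0:ℝ) < 2 * (1 - x ^ 2) := by positivity
  have hle : Real.exp (-(u + C * x) ^ 2 / (2 * (1 - x ^ 2)))
      ≤ Real.exp (-(u - C * x) ^ 2 / (2 * (1 - x ^ 2))) := by
    apply Real.exp_le_exp.2
    apply (div_le_div_iff_of_pos_right h2v).2
    nlinarith [mul_nonneg (mul_nonneg hu hC) hx0]
  have h1 : (-u - C * x) ^ 2 = (u + C * x) ^ 2 := by ring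
  have h2 : (-u + C * x) ^ 2 = (u - C * x) ^ 2 := by ring
  simp only [h1, h2]
  nlinarith [mul_nonneg hKc0 (sub_nonneg.2 hle)]

lemma g_intervalIntegrable (C x u : ℝ) :
    IntervalIntegrable (fun t => phi t * g C x t) MeasureTheory.volume (-u) u :=
  (phi_continuous.mul (g_cont_t C x)).intervalIntegrable _ _

lemma core (u C : ℝ) (hu : 0 ≤ u) (hC : 0 ≤ C) {τ σ : ℝ} (h0 : 0 ≤ τ) (hts : τ ≤ σ)
    (h1 : σ < 1) : (gam.prod gam) (E u C τ) ≤ (gam.prod gam) (E u C σ) := by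
  have hτ1 : τ ^ 2 < 1 := by nlinarith
  have hσ1 : σ ^ 2 < 1 := by nlinarith
  rw [K_repr u C τ hu hC hτ1, K_repr u C σ hu hC hσ1]
  apply ENNReal.ofReal_le_ofReal
  rw [← sub_nonneg, ← intervalIntegral.integral_sub (g_intervalIntegrable C σ u)
    (g_intervalIntegrable C τ u)]
  have hF : ContinuousOn (fun z : ℝ × ℝ => D C z.1 z.2 * phi z.2)
      (Set.Icc τ σ ×ˢ Set.Icc (-u) u) := by
    apply ContinuousOn.mul
    · exact (D_contOn C τ σ h0 h1).mono
        (Set.prod_mono subset_rfl (Set.subset_univ _))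
    · exact (phi_continuous.comp continuous_snd).continuousOn
  have hInt : Integrable (fun z : ℝ × ℝ => D C z.1 z.2 * phi z.2)
      ((volume.restrict (Set.Icc τ σ)).prod (volume.restrict (Set.Icc (-u) u))) := by
    rw [Measure.prod_restrict]
    exact hF.integrableOn_compact (isCompact_Icc.prod isCompact_Icc)
  have step1 : ∀ t, phi t * g C σ t - phi t * g C τ t
      = ∫ x in Set.Icc τ σ, D C x t * phi t := by
    intro t
    rw [← mul_sub, g_sub C t h0 hts h1, intervalIntegral.integral_of_le hts,
      ← MeasureTheory.integral_Icc_eq_integral_Ioc, ← MeasureTheory.integral_const_mul]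
    congr 1
    ext x
    ring
  calc (0:ℝ) ≤ ∫ x in Set.Icc τ σ, ∫ t in Set.Icc (-u) u, D C x t * phi t := by
        apply MeasureTheory.setIntegral_nonneg measurableSet_Icc
        intro x hx
        rw [MeasureTheory.integral_Icc_eq_integral_Ioc,
          ← intervalIntegral.integral_of_le (by linarith : -u ≤ u)]
        exact inner_nonneg C u hC hu (le_trans h0 hx.1) (sx_pos_of_mem h0 h1 hx)
    _ = ∫ t in Set.Icc (-u) u, ∫ x in Set.Icc τ σ, D C x t * phi t :=
        MeasureTheory.integral_integral_swap hInt
    _ = ∫ t in Set.Icc (-u) u, (phi t * g C σ t - phi t * g C τ t) :=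
        MeasureTheory.integral_congr_ae (Filter.Eventually.of_forall fun t => (step1 t).symm)
    _ = ∫ t in (-u)..u, (phi t * g C σ t - phi t * g C τ t) := by
        rw [MeasureTheory.integral_Icc_eq_integral_Ioc,
          ← intervalIntegral.integral_of_le (by linarith : -u ≤ u)]

lemma gam_singleton (y : ℝ) : gam {y} = 0 :=
  (gaussianReal_absolutelyContinuous 0 one_ne_zero) (measure_singleton y)

lemma sx_one : sx 1 = 0 := by simp [sx]

lemma core_one (u C : ℝ) (hu : 0 ≤ u) (hC : 0 ≤ C) {τ : ℝ} (h0 : 0 ≤ τ) (h1 : τ < 1) :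
    (gam.prod gam) (E u C τ) ≤ (gam.prod gam) (E u C 1) := by
  set x : ℕ → ℝ := fun n => 1 - (1 - τ) / (n + 1) with hxdef
  have hx_lt : ∀ n, x n < 1 := by
    intro n
    have : (0:ℝ) < (1 - τ) / (n + 1) := div_pos (by linarith) (by positivity)
    simp only [hxdef]; linarith
  have hx_ge : ∀ n, τ ≤ x n := by
    intro n
    have h1n : (1:ℝ) ≤ (n:ℝ) + 1 := by
      have : (0:ℝ) ≤ n := Nat.cast_nonneg n
      linarith
    have h2 : (1 - τ) / (n + 1) ≤ 1 - τ := div_le_self (by linarith) h1n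
    simp only [hxdef]
    linarith
  have hx_tendsto : Filter.Tendsto x Filter.atTop (nhds 1) := by
    have h0' : Filter.Tendsto (fun n : ℕ => (1 - τ) / (n + 1)) Filter.atTop (nhds 0) := by
      have := tendsto_one_div_add_atTop_nhds_zero_nat (𝕜 := ℝ)
      have h2 := this.const_mul (1 - τ)
      simp only [mul_zero] at h2
      convert h2 using 2 with n
      field_simp
    have := h0'.const_sub 1
    simpa using this
  -- a.e. convergence of indicators
  have hpairnull : gam ({C, -C} : Set ℝ) = 0 := by
    refine le_antisymm ?_ zero_le
    rw [Set.insert_eq]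
    refine le_trans (measure_union_le _ _) ?_
    simp [gam_singleton]
  have hae : ∀ᵐ p ∂(gam.prod gam), p.2 ^ 2 ≠ C ^ 2 := by
    rw [MeasureTheory.ae_iff]
    have hsub : {p : ℝ × ℝ | ¬ p.2 ^ 2 ≠ C ^ 2}
        ⊆ (Set.univ : Set ℝ) ×ˢ ({C, -C} : Set ℝ) := by
      intro p hp
      simp only [Set.mem_setOf_eq, not_not] at hp
      have hfac : (p.2 - C) * (p.2 + C) = 0 := by linear_combination hp
      refine ⟨Set.mem_univ _, ?_⟩
      simp only [Set.mem_insert_iff, Set.mem_singleton_iff]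
      rcases mul_eq_zero.mp hfac with h | h
      · left; linarith
      · right; linarith
    refine measure_mono_null hsub ?_
    rw [Measure.prod_prod, hpairnull, mul_zero]
  have key : Filter.Tendsto (fun n => (gam.prod gam) (E u C (x n))) Filter.atTop
      (nhds ((gam.prod gam) (E u C 1))) := by
    have hrepr : ∀ y : ℝ, (gam.prod gam) (E u C y)
        = ∫⁻ p, (E u C y).indicator (fun _ => 1) p ∂(gam.prod gam) := by
      intro y
      rw [MeasureTheory.lintegral_indicator (measurableSet_E u C y),
        MeasureTheory.setLIntegral_one]
    simp_rw [hrepr]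
    apply MeasureTheory.tendsto_lintegral_of_dominated_convergence
      (bound := fun _ => 1)
    · intro n
      exact (measurable_const.indicator (measurableSet_E u C (x n)))
    · intro n
      exact Filter.Eventually.of_forall fun p => Set.indicator_le_self _ _ p
    · simp
    · filter_upwards [hae] with p hp
      by_cases hu2 : p.2 ^ 2 ≤ u ^ 2
      · rcases lt_or_gt_of_ne hp with hlt | hgt
        · -- p.2 ^ 2 < C ^ 2 : eventually in all sets
          have hcont : Filter.Tendsto (fun n => (sx (x n) * p.1 + x n * p.2) ^ 2)
              Filter.atTop (nhds (p.2 ^ 2)) := by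
            have hc : Continuous (fun y : ℝ => (sx y * p.1 + y * p.2) ^ 2) := by
              have := sx_continuous
              fun_prop
            have := (hc.continuousAt (x := 1)).tendsto.comp hx_tendsto
            simpa [sx_one, Function.comp_def] using this
          have hev : ∀ᶠ n in Filter.atTop, (sx (x n) * p.1 + x n * p.2) ^ 2 ≤ C ^ 2 :=
            (hcont.eventually_lt_const hlt).mono fun n h => h.le
          have heq : ∀ᶠ n in Filter.atTop,
              (E u C (x n)).indicator (fun _ => (1:ENNReal)) p
                = (E u C 1).indicator (fun _ => (1:ENNReal)) p := by
            filter_upwards [hev] with n hn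
            have hmem1 : p ∈ E u C (x n) := ⟨hu2, hn⟩
            have hmem2 : p ∈ E u C 1 := ⟨hu2, by rw [sx_one]; simpa using hlt.le⟩
            rw [Set.indicator_of_mem hmem1, Set.indicator_of_mem hmem2]
          exact Filter.Tendsto.congr' (heq.mono fun n h => h.symm) tendsto_const_nhds
        · -- p.2 ^ 2 > C ^ 2 : eventually out of all sets
          have hcont : Filter.Tendsto (fun n => (sx (x n) * p.1 + x n * p.2) ^ 2)
              Filter.atTop (nhds (p.2 ^ 2)) := by
            have hc : Continuous (fun y : ℝ => (sx y * p.1 + y * p.2) ^ 2) := by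
              have := sx_continuous
              fun_prop
            have := (hc.continuousAt (x := 1)).tendsto.comp hx_tendsto
            simpa [sx_one, Function.comp_def] using this
          have hev : ∀ᶠ n in Filter.atTop, C ^ 2 < (sx (x n) * p.1 + x n * p.2) ^ 2 :=
            hcont.eventually_const_lt hgt
          have heq : ∀ᶠ n in Filter.atTop,
              (E u C (x n)).indicator (fun _ => (1:ENNReal)) p
                = (E u C 1).indicator (fun _ => (1:ENNReal)) p := by
            filter_upwards [hev] with n hn
            have hmem1 : p ∉ E u C (x n) := fun hmem => absurd hmem.2 (not_le.2 hn)
            have hmem2 : p ∉ E u C 1 := by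
              intro hmem
              have h5 := hmem.2
              rw [sx_one] at h5
              simp at h5
              nlinarith
            rw [Set.indicator_of_notMem hmem1, Set.indicator_of_notMem hmem2]
          exact Filter.Tendsto.congr' (heq.mono fun n h => h.symm) tendsto_const_nhds
      · have heq : ∀ n : ℕ, (E u C (x n)).indicator (fun _ => (1:ENNReal)) p
            = (E u C 1).indicator (fun _ => (1:ENNReal)) p := by
          intro n
          rw [Set.indicator_of_notMem (fun hmem => absurd hmem.1 hu2),
            Set.indicator_of_notMem (fun hmem => absurd hmem.1 hu2)]
        exact Filter.Tendsto.congr (fun n => (heq n).symm) tendsto_const_nhds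
  exact ge_of_tendsto key (Filter.Eventually.of_forall fun n =>
    core u C hu hC h0 (hx_ge n) (hx_lt n))

lemma oneDim (b c : ℝ) {τ σ : ℝ} (h0 : 0 ≤ τ) (hts : τ ≤ σ) (h1 : σ ≤ 1) :
    (gam.prod gam) {p : ℝ × ℝ | p.2 ^ 2 ≤ b ∧ (sx τ * p.1 + τ * p.2) ^ 2 ≤ c}
      ≤ (gam.prod gam) {p : ℝ × ℝ | p.2 ^ 2 ≤ b ∧ (sx σ * p.1 + σ * p.2) ^ 2 ≤ c} := by
  rcases eq_or_lt_of_le hts with rfl | hlt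
  · exact le_refl _
  have hτ1 : τ < 1 := lt_of_lt_of_le hlt h1
  by_cases hb : b ≤ 0
  · have hsub : {p : ℝ × ℝ | p.2 ^ 2 ≤ b ∧ (sx τ * p.1 + τ * p.2) ^ 2 ≤ c}
        ⊆ (Set.univ : Set ℝ) ×ˢ ({0} : Set ℝ) := by
      intro p hp
      have h3 : p.2 ^ 2 = 0 := le_antisymm (hp.1.trans hb) (sq_nonneg _)
      have h2 : p.2 = 0 := by
        exact pow_eq_zero_iff two_ne_zero |>.mp h3
      exact ⟨Set.mem_univ _, h2⟩
    refine le_trans (measure_mono hsub) ?_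
    rw [Measure.prod_prod, gam_singleton, mul_zero]
    exact zero_le
  by_cases hc : c ≤ 0
  · have hsx : 0 < sx τ := sx_pos (by nlinarith)
    have hsub : {p : ℝ × ℝ | p.2 ^ 2 ≤ b ∧ (sx τ * p.1 + τ * p.2) ^ 2 ≤ c}
        ⊆ {p : ℝ × ℝ | p.1 = (-τ * p.2) / sx τ} := by
      intro p hp
      have h3 : (sx τ * p.1 + τ * p.2) ^ 2 = 0 := le_antisymm (hp.2.trans hc) (sq_nonneg _)
      have h4 : sx τ * p.1 + τ * p.2 = 0 := pow_eq_zero_iff two_ne_zero |>.mp h3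
      show p.1 = (-τ * p.2) / sx τ
      field_simp
      linarith
    have hms : MeasurableSet {p : ℝ × ℝ | p.1 = (-τ * p.2) / sx τ} :=
      measurableSet_eq_fun measurable_fst (by fun_prop)
    refine le_trans (measure_mono hsub) (le_trans (le_of_eq ?_) zero_le)
    rw [Measure.prod_apply_symm hms]
    have hz : ∀ t : ℝ, gam ((fun e => (e, t)) ⁻¹' {p : ℝ × ℝ | p.1 = (-τ * p.2) / sx τ}) = 0 := by
      intro t
      have hpre : (fun e => (e, t)) ⁻¹' {p : ℝ × ℝ | p.1 = (-τ * p.2) / sx τ}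
          = {(-τ * t) / sx τ} := by
        ext e
        simp [Set.mem_preimage]
      rw [hpre, gam_singleton]
    rw [lintegral_congr hz]
    simp
  push_neg at hb hc
  have hbu : b = (Real.sqrt b) ^ 2 := (Real.sq_sqrt hb.le).symm
  have hcu : c = (Real.sqrt c) ^ 2 := (Real.sq_sqrt hc.le).symm
  rw [hbu, hcu]
  have hE : ∀ y : ℝ, {p : ℝ × ℝ | p.2 ^ 2 ≤ Real.sqrt b ^ 2
      ∧ (sx y * p.1 + y * p.2) ^ 2 ≤ Real.sqrt c ^ 2} = E (Real.sqrt b) (Real.sqrt c) y :=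
    fun y => rfl
  rw [hE, hE]
  rcases eq_or_lt_of_le h1 with rfl | hσ1
  · exact core_one _ _ (Real.sqrt_nonneg b) (Real.sqrt_nonneg c) h0 hτ1
  · exact core _ _ (Real.sqrt_nonneg b) (Real.sqrt_nonneg c) h0 hts hσ1

section Plumbing

variable {n : ℕ}

/-- n-fold product of standard gaussians -/
noncomputable def pin (n : ℕ) : Measure (Fin n → ℝ) := Measure.pi fun _ => gam

instance : IsProbabilityMeasure (pin n) := by
  unfold pin; infer_instance

lemma measurable_sumsq (f : Fin n → ((Fin n → ℝ) × (Fin n → ℝ)) → ℝ)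
    (hf : ∀ i, Measurable (f i)) :
    Measurable (fun q => ∑ i, f i q ^ 2) := by
  apply Finset.measurable_sum
  intro i _
  exact (hf i).pow_const 2

lemma measurableSet_SA (a R : ℝ) (v : Fin n → ℝ) :
    MeasurableSet ({q : (Fin n → ℝ) × (Fin n → ℝ) | ∑ i, q.2 i ^ 2 ≤ a}
      ∩ {q | ∑ i, (Real.sqrt (1 - v i ^ 2) * q.1 i + v i * q.2 i) ^ 2 ≤ R}) := by
  apply MeasurableSet.inter
  · exact measurableSet_le (measurable_sumsq _ fun i =>
      (measurable_pi_apply i).comp measurable_snd) measurable_const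
  · exact measurableSet_le (measurable_sumsq _ fun i =>
      (((measurable_pi_apply i).comp measurable_fst).const_mul _).add
        (((measurable_pi_apply i).comp measurable_snd).const_mul _)) measurable_const

lemma oneCoord (j : Fin (n + 1)) (a R : ℝ) (v w : Fin (n + 1) → ℝ)
    (hvw : ∀ i, i ≠ j → v i = w i) (h0 : 0 ≤ v j) (hj : v j ≤ w j) (h1 : w j ≤ 1) :
    ((pin (n+1)).prod (pin (n+1)))
      ({q : (Fin (n+1) → ℝ) × (Fin (n+1) → ℝ) | ∑ i, q.2 i ^ 2 ≤ a}
        ∩ {q | ∑ i, (Real.sqrt (1 - v i ^ 2) * q.1 i + v i * q.2 i) ^ 2 ≤ R})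
    ≤ ((pin (n+1)).prod (pin (n+1)))
      ({q : (Fin (n+1) → ℝ) × (Fin (n+1) → ℝ) | ∑ i, q.2 i ^ 2 ≤ a}
        ∩ {q | ∑ i, (Real.sqrt (1 - w i ^ 2) * q.1 i + w i * q.2 i) ^ 2 ≤ R}) := by
  classical
  -- the insertion map
  set T : ℝ × (Fin n → ℝ) → (Fin (n+1) → ℝ) :=
    fun p => (MeasurableEquiv.piFinSuccAbove (fun _ => ℝ) j).symm p with hTdef
  have hT : MeasurePreserving T (gam.prod (pin n)) (pin (n+1)) :=
    MeasurePreserving.symm _ (measurePreserving_piFinSuccAbove (fun _ : Fin (n+1) => gam) j)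
  -- rearrangement map
  set ψ : (ℝ × ℝ) × ((Fin n → ℝ) × (Fin n → ℝ)) → (ℝ × (Fin n → ℝ)) × (ℝ × (Fin n → ℝ)) :=
    fun q => ((q.1.1, q.2.1), (q.1.2, q.2.2)) with hψdef
  have hψ : MeasurePreserving ψ ((gam.prod gam).prod ((pin n).prod (pin n)))
      ((gam.prod (pin n)).prod (gam.prod (pin n))) := by
    have m1 := measurePreserving_prodAssoc (μa := gam) (μb := gam)
      (μc := (pin n).prod (pin n))
    have m2 := (MeasurePreserving.id gam).prod
      (MeasurePreserving.symm _
        (measurePreserving_prodAssoc (μa := gam) (μb := pin n) (μc := pin n)))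
    have m3 := (MeasurePreserving.id gam).prod
      ((Measure.measurePreserving_swap (μ := gam) (ν := pin n)).prod
        (MeasurePreserving.id (pin n)))
    have m4 := (MeasurePreserving.id gam).prod
      (measurePreserving_prodAssoc (μa := pin n) (μb := gam) (μc := pin n))
    have m5 := MeasurePreserving.symm _
      (measurePreserving_prodAssoc (μa := gam) (μb := pin n) (μc := gam.prod (pin n)))
    exact m5.comp (m4.comp (m3.comp (m2.comp m1)))
  have hΦ : MeasurePreserving (fun q => (T (ψ q).1, T (ψ q).2))
      ((gam.prod gam).prod ((pin n).prod (pin n))) ((pin (n+1)).prod (pin (n+1))) :=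
    (hT.prod hT).comp hψ
  rw [← hΦ.measure_preimage (measurableSet_SA a R v).nullMeasurableSet,
    ← hΦ.measure_preimage (measurableSet_SA a R w).nullMeasurableSet]
  have hmeas : ∀ vv : Fin (n+1) → ℝ, MeasurableSet ((fun q => (T (ψ q).1, T (ψ q).2)) ⁻¹'
      ({q : (Fin (n+1) → ℝ) × (Fin (n+1) → ℝ) | ∑ i, q.2 i ^ 2 ≤ a}
        ∩ {q | ∑ i, (Real.sqrt (1 - vv i ^ 2) * q.1 i + vv i * q.2 i) ^ 2 ≤ R})) :=
    fun vv => (hΦ.measurable) (measurableSet_SA a R vv)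
  rw [Measure.prod_apply_symm (hmeas v), Measure.prod_apply_symm (hmeas w)]
  apply lintegral_mono
  intro ω
  dsimp only
  -- slice identification
  have hset : ∀ vv : Fin (n+1) → ℝ,
      ((fun p : ℝ × ℝ => (p, ω)) ⁻¹' ((fun q => (T (ψ q).1, T (ψ q).2)) ⁻¹'
        ({q : (Fin (n+1) → ℝ) × (Fin (n+1) → ℝ) | ∑ i, q.2 i ^ 2 ≤ a}
          ∩ {q | ∑ i, (Real.sqrt (1 - vv i ^ 2) * q.1 i + vv i * q.2 i) ^ 2 ≤ R})))
      = {p : ℝ × ℝ | p.2 ^ 2 ≤ a - ∑ k, ω.2 k ^ 2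
          ∧ (sx (vv j) * p.1 + vv j * p.2) ^ 2
            ≤ R - ∑ k, (Real.sqrt (1 - vv (j.succAbove k) ^ 2) * ω.1 k
                + vv (j.succAbove k) * ω.2 k) ^ 2} := by
    intro vv
    ext p
    simp only [Set.mem_preimage, Set.mem_inter_iff, Set.mem_setOf_eq, hψdef, hTdef,
      MeasurableEquiv.piFinSuccAbove_symm_apply, Fin.insertNthEquiv, Equiv.coe_fn_mk,
      Fin.sum_univ_succAbove _ j, Fin.insertNth_apply_same, Fin.insertNth_apply_succAbove, sx]
    constructor
    · rintro ⟨hA, hB⟩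
      exact ⟨by linarith, by linarith⟩
    · rintro ⟨hA, hB⟩
      exact ⟨by linarith, by linarith⟩
  rw [hset v, hset w]
  have hsum_eq : (∑ k, (Real.sqrt (1 - v (j.succAbove k) ^ 2) * ω.1 k
        + v (j.succAbove k) * ω.2 k) ^ 2)
      = ∑ k, (Real.sqrt (1 - w (j.succAbove k) ^ 2) * ω.1 k
        + w (j.succAbove k) * ω.2 k) ^ 2 := by
    apply Finset.sum_congr rfl
    intro k _
    rw [hvw _ (Fin.succAbove_ne j k)]
  rw [hsum_eq]
  exact oneDim _ _ h0 hj h1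

lemma main_ineq (m : ℕ) (ρ ρ' : Fin m → ℝ) (a r : ℝ)
    (h0 : ∀ j, 0 ≤ ρ' j) (hle : ∀ j, ρ' j ≤ ρ j) (h1 : ∀ j, ρ j ≤ 1) :
    ((pin m).prod (pin m)) ({q : (Fin m → ℝ) × (Fin m → ℝ) | ∑ i, q.2 i ^ 2 ≤ a}
      ∩ {q | ∑ i, (Real.sqrt (1 - ρ' i ^ 2) * q.1 i + ρ' i * q.2 i) ^ 2 ≤ r ^ 2})
    ≤ ((pin m).prod (pin m)) ({q : (Fin m → ℝ) × (Fin m → ℝ) | ∑ i, q.2 i ^ 2 ≤ a}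
      ∩ {q | ∑ i, (Real.sqrt (1 - ρ i ^ 2) * q.1 i + ρ i * q.2 i) ^ 2 ≤ r ^ 2}) := by
  cases m with
  | zero =>
    apply le_of_eq
    congr 1
  | succ n =>
    classical
    set itp : ℕ → Fin (n+1) → ℝ := fun k i => if (i : ℕ) < k then ρ i else ρ' i with hitp
    have hchain : ∀ k : ℕ,
        ((pin (n+1)).prod (pin (n+1))) ({q : (Fin (n+1) → ℝ) × (Fin (n+1) → ℝ)
            | ∑ i, q.2 i ^ 2 ≤ a}
          ∩ {q | ∑ i, (Real.sqrt (1 - itp 0 i ^ 2) * q.1 i + itp 0 i * q.2 i) ^ 2 ≤ r ^ 2})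
        ≤ ((pin (n+1)).prod (pin (n+1))) ({q : (Fin (n+1) → ℝ) × (Fin (n+1) → ℝ)
            | ∑ i, q.2 i ^ 2 ≤ a}
          ∩ {q | ∑ i, (Real.sqrt (1 - itp k i ^ 2) * q.1 i + itp k i * q.2 i) ^ 2 ≤ r ^ 2}) := by
      intro k
      induction k with
      | zero => exact le_refl _
      | succ k ih =>
        refine le_trans ih ?_
        by_cases hk : k < n + 1
        · set j : Fin (n + 1) := ⟨k, hk⟩ with hjdef
          have hvj : itp k j = ρ' j := by
            simp only [hitp, hjdef]
            rw [if_neg (lt_irrefl k)]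
          have hwj : itp (k+1) j = ρ j := by
            simp only [hitp, hjdef]
            rw [if_pos (Nat.lt_succ_self k)]
          have hvw : ∀ i, i ≠ j → itp k i = itp (k+1) i := by
            intro i hi
            have hik : (i : ℕ) ≠ k := fun h => hi (Fin.ext h)
            simp only [hitp]
            by_cases hlt' : (i : ℕ) < k
            · rw [if_pos hlt', if_pos (Nat.lt_succ_of_lt hlt')]
            · rw [if_neg hlt', if_neg
                (fun h => hlt' (lt_of_le_of_ne (Nat.lt_succ_iff.1 h) hik))]
          exact oneCoord j a (r ^ 2) (itp k) (itp (k+1)) hvw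
            (hvj ▸ h0 j) (by rw [hvj, hwj]; exact hle j) (hwj ▸ h1 j)
        · have heq : itp k = itp (k+1) := funext fun i => by
            have hik : (i : ℕ) < k := lt_of_lt_of_le i.isLt (not_lt.1 hk)
            simp only [hitp]
            rw [if_pos hik, if_pos (Nat.lt_succ_of_lt hik)]
          rw [← heq]
    have h0' : itp 0 = ρ' := funext fun i => by simp [hitp]
    have hm' : itp (n+1) = ρ := funext fun i => by simp [hitp, i.isLt]
    have hfin := hchain (n+1)
    rw [h0', hm'] at hfin
    exact hfin

end Plumbing

end Stmt16Aux

/-- The standard Gaussian measure `N(0, I_m)` on `ℝ^m`. -/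
noncomputable def stdGaussian (m : ℕ) : Measure (Fin m → ℝ) :=
  Measure.pi fun _ => gaussianReal 0 1

/-- For independent `ε, η ~ N(0, I_m)` and diagonal `Δ = diag(ρ)`,
`Δ̃ = diag(ρ̃)` with `0 ≤ ρ̃_j ≤ ρ_j ≤ 1`, for every `r ≥ 0` and `a > 0`,
`P((I−Δ²)^{1/2} ε + Δη ∈ B_m(r) | η'η ≤ a) ≥ P((I−Δ̃²)^{1/2} ε + Δ̃η ∈ B_m(r) | η'η ≤ a)`. -/
theorem stmt16 (m : ℕ) (ρ ρ' : Fin m → ℝ) (a r : ℝ) (ha : 0 < a) (hr : 0 ≤ r)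
    (h0 : ∀ j, 0 ≤ ρ' j) (hle : ∀ j, ρ' j ≤ ρ j) (h1 : ∀ j, ρ j ≤ 1) :
    letI μ := (stdGaussian m).prod (stdGaussian m)
    letI S := {q : (Fin m → ℝ) × (Fin m → ℝ) | ∑ i, q.2 i ^ 2 ≤ a}
    (μ[|S]) {q | ∑ i, (Real.sqrt (1 - ρ' i ^ 2) * q.1 i + ρ' i * q.2 i) ^ 2 ≤ r ^ 2}
      ≤ (μ[|S]) {q | ∑ i, (Real.sqrt (1 - ρ i ^ 2) * q.1 i + ρ i * q.2 i) ^ 2 ≤ r ^ 2} := by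
  show ((stdGaussian m).prod (stdGaussian m))[|{q : (Fin m → ℝ) × (Fin m → ℝ)
      | ∑ i, q.2 i ^ 2 ≤ a}]
      {q | ∑ i, (Real.sqrt (1 - ρ' i ^ 2) * q.1 i + ρ' i * q.2 i) ^ 2 ≤ r ^ 2}
    ≤ ((stdGaussian m).prod (stdGaussian m))[|{q : (Fin m → ℝ) × (Fin m → ℝ)
      | ∑ i, q.2 i ^ 2 ≤ a}]
      {q | ∑ i, (Real.sqrt (1 - ρ i ^ 2) * q.1 i + ρ i * q.2 i) ^ 2 ≤ r ^ 2}
  have hS : MeasurableSet {q : (Fin m → ℝ) × (Fin m → ℝ) | ∑ i, q.2 i ^ 2 ≤ a} :=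
    measurableSet_le (Stmt16Aux.measurable_sumsq _ fun i =>
      (measurable_pi_apply i).comp measurable_snd) measurable_const
  rw [ProbabilityTheory.cond_apply hS, ProbabilityTheory.cond_apply hS]
  exact mul_le_mul_right (Stmt16Aux.main_ineq m ρ ρ' a r h0 hle h1) _
end
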